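/- arXiv:1909.09239 — 5 statements merged into one kernel-verified Lean document; each statement's English description precedes it below -/
import Mathlib

section
/- Let ȳ > 0, let I be a hyperinterval in ℝ^d, and let g : I × [0,ȳ] → ℂ be such that: for each x ∈ I the map y ↦ g(x,y) is twice continuously differentiable on [0,ȳ]; there is a constant M₀ with |g(x,y)| ≤ M₀, |∂_y g(x,y)| ≤ M₀ and |∂²_y g(x,y)| ≤ M₀ for all (x,y) ∈ I × [0,ȳ]; for each y ∈ [0,ȳ] the functions x ↦ g(x,y), x ↦ ∂_y g(x,y), x ↦ ∂²_y g(x,y) are measurable and belong to L²(I), with sup_{y∈[0,ȳ]} (‖g(·,y)‖_{L²(I)} + ‖∂_y g(·,y)‖_{L²(I)} + ‖∂²_y g(·,y)‖_{L²(I)}) < ∞. Then there exist y₀ ∈ (0, ȳ] with y₀ M₀ < 1 and a constant M such that for every y ∈ (0, y₀], ‖ (1/y)·Log(1 + y·g(·,y)) − g(·,0) ‖_{L²(I)} ≤ M·y, where Log is the principal branch of the complex logarithm (well defined since |y·g(x,y)| < 1). -/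
open MeasureTheory

/-- If `g(x,y)` is twice continuously differentiable in `y` on `[0,ȳ]`,
uniformly bounded together with its first two `y`-derivatives by `M₀`, and `g`, `∂_y g`,
`∂²_y g` lie in `L²(I)` uniformly in `y`, then there are `y₀ ∈ (0,ȳ]` with `y₀ M₀ < 1`
and a constant `M` such that for all `y ∈ (0,y₀]`,
`‖ (1/y)·Log(1 + y g(·,y)) − g(·,0) ‖_{L²(I)} ≤ M y`. -/
theorem stmt0
    (d : ℕ) (ybar : ℝ) (hybar : 0 < ybar)
    (a b : Fin d → ℝ)
    (I : Set (Fin d → ℝ)) (hI : I = Set.Icc a b)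
    (g g1 g2 : (Fin d → ℝ) → ℝ → ℂ)
    (hderiv1 : ∀ x ∈ I, ∀ y ∈ Set.Icc (0:ℝ) ybar,
      HasDerivWithinAt (g x) (g1 x y) (Set.Icc (0:ℝ) ybar) y)
    (hderiv2 : ∀ x ∈ I, ∀ y ∈ Set.Icc (0:ℝ) ybar,
      HasDerivWithinAt (g1 x) (g2 x y) (Set.Icc (0:ℝ) ybar) y)
    (hcont2 : ∀ x ∈ I, ContinuousOn (g2 x) (Set.Icc (0:ℝ) ybar))
    (M0 : ℝ)
    (hbound : ∀ x ∈ I, ∀ y ∈ Set.Icc (0:ℝ) ybar,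
      ‖g x y‖ ≤ M0 ∧ ‖g1 x y‖ ≤ M0 ∧ ‖g2 x y‖ ≤ M0)
    (hL2 : ∀ y ∈ Set.Icc (0:ℝ) ybar,
      MemLp (fun x => g x y) 2 (volume.restrict I) ∧
      MemLp (fun x => g1 x y) 2 (volume.restrict I) ∧
      MemLp (fun x => g2 x y) 2 (volume.restrict I))
    (K : ℝ)
    (hK : ∀ y ∈ Set.Icc (0:ℝ) ybar,
      eLpNorm (fun x => g x y) 2 (volume.restrict I)
        + eLpNorm (fun x => g1 x y) 2 (volume.restrict I)
        + eLpNorm (fun x => g2 x y) 2 (volume.restrict I) ≤ ENNReal.ofReal K) :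
    ∃ y₀ ∈ Set.Ioc (0:ℝ) ybar, y₀ * M0 < 1 ∧ ∃ M : ℝ, ∀ y ∈ Set.Ioc (0:ℝ) y₀,
      eLpNorm
        (fun x => (1 / (y:ℂ)) * Complex.log (1 + (y:ℂ) * g x y) - g x 0) 2
        (volume.restrict I) ≤ ENNReal.ofReal (M * y) := by
  classical
  set A : ℝ := |M0| with hA
  have hA0 : 0 ≤ A := abs_nonneg _
  set y₀ : ℝ := min ybar (1 / (2 * (A + 1))) with hy₀def
  have hApos : 0 < 2 * (A + 1) := by positivity
  have hy₀pos : 0 < y₀ := lt_min hybar (by positivity)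
  have hy₀le : y₀ ≤ ybar := min_le_left _ _
  have hy₀small : y₀ * A ≤ 1 / 2 := by
    have h1 : y₀ ≤ 1 / (2 * (A + 1)) := min_le_right _ _
    have h2 : y₀ * A ≤ (1 / (2 * (A + 1))) * A :=
      mul_le_mul_of_nonneg_right h1 hA0
    have h3 : (1 / (2 * (A + 1))) * A ≤ 1 / 2 := by
      rw [div_mul_eq_mul_div, div_le_div_iff₀ hApos (by norm_num)]
      nlinarith
    linarith
  refine ⟨y₀, ⟨hy₀pos, hy₀le⟩, ?_, ?_⟩
  · have : y₀ * M0 ≤ y₀ * A := by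
      apply mul_le_mul_of_nonneg_left (le_abs_self _) hy₀pos.le
    linarith
  · -- main bound
    have hVlt : volume I < ⊤ := by
      rw [hI]; exact (isCompact_Icc).measure_lt_top
    set V : ℝ := (volume I).toReal with hVdef
    have hV0 : 0 ≤ V := ENNReal.toReal_nonneg
    set C : ℝ := A ^ 2 + A with hCdef
    have hC0 : 0 ≤ C := by positivity
    refine ⟨V ^ (2⁻¹ : ℝ) * C, fun y hy => ?_⟩
    obtain ⟨hy0, hyle⟩ := hy
    have hyI : y ∈ Set.Icc (0:ℝ) ybar := ⟨hy0.le, hyle.trans hy₀le⟩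
    have hyA : y * A ≤ 1 / 2 := by
      have := mul_le_mul_of_nonneg_right hyle hA0
      linarith
    -- pointwise bound
    have hpt : ∀ x ∈ I,
        ‖(1 / (y:ℂ)) * Complex.log (1 + (y:ℂ) * g x y) - g x 0‖ ≤ C * y := by
      intro x hx
      obtain ⟨hb0, hb1, _⟩ := hbound x hx y hyI
      have hgA : ‖g x y‖ ≤ A := hb0.trans (le_abs_self _)
      set z : ℂ := (y:ℂ) * g x y with hzdef
      have hznorm : ‖z‖ ≤ y * A := by
        rw [hzdef, norm_mul, Complex.norm_real, Real.norm_eq_abs, abs_of_pos hy0]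
        exact mul_le_mul_of_nonneg_left hgA hy0.le
      have hzhalf : ‖z‖ ≤ 1 / 2 := hznorm.trans hyA
      have hzlt : ‖z‖ < 1 := hzhalf.trans_lt (by norm_num)
      have hyne : (y:ℂ) ≠ 0 := by exact_mod_cast hy0.ne'
      have hsplit : (1 / (y:ℂ)) * Complex.log (1 + z) - g x 0 =
          (1 / (y:ℂ)) * (Complex.log (1 + z) - z) + (g x y - g x 0) := by
        field_simp [hzdef]
        ring
      rw [hsplit]
      have hlog : ‖Complex.log (1 + z) - z‖ ≤ ‖z‖ ^ 2 := by
        have := Complex.norm_log_one_add_sub_self_le hzlt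
        have hinv : (1 - ‖z‖)⁻¹ ≤ 2 := by
          rw [inv_le_comm₀ (by linarith) (by norm_num)]
          linarith
        calc ‖Complex.log (1 + z) - z‖ ≤ ‖z‖ ^ 2 * (1 - ‖z‖)⁻¹ / 2 := this
          _ ≤ ‖z‖ ^ 2 * 2 / 2 := by gcongr
          _ = ‖z‖ ^ 2 := by ring
      have hterm1 : ‖(1 / (y:ℂ)) * (Complex.log (1 + z) - z)‖ ≤ A ^ 2 * y := by
        rw [norm_mul]
        have h1y : ‖(1 / (y:ℂ))‖ = 1 / y := by
          rw [norm_div, norm_one, Complex.norm_real, Real.norm_eq_abs, abs_of_pos hy0]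
        rw [h1y]
        have hz2 : ‖z‖ ^ 2 ≤ (y * A) ^ 2 := by
          apply pow_le_pow_left₀ (norm_nonneg _) hznorm
        calc (1 / y) * ‖Complex.log (1 + z) - z‖ ≤ (1 / y) * (y * A) ^ 2 := by
              apply mul_le_mul_of_nonneg_left (hlog.trans hz2) (by positivity)
          _ = A ^ 2 * y := by field_simp
      have hterm2 : ‖g x y - g x 0‖ ≤ A * y := by
        have hmvt := Convex.norm_image_sub_le_of_norm_hasDerivWithin_le
          (f := g x) (f' := g1 x) (s := Set.Icc (0:ℝ) ybar) (C := A)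
          (fun t ht => hderiv1 x hx t ht)
          (fun t ht => ((hbound x hx t ht).2.1).trans (le_abs_self _))
          (convex_Icc _ _) ⟨le_refl (0:ℝ), hybar.le⟩ hyI
        simpa [abs_of_pos hy0, mul_comm] using hmvt
      calc ‖(1 / (y:ℂ)) * (Complex.log (1 + z) - z) + (g x y - g x 0)‖
          ≤ ‖(1 / (y:ℂ)) * (Complex.log (1 + z) - z)‖ + ‖g x y - g x 0‖ :=
            norm_add_le _ _
        _ ≤ A ^ 2 * y + A * y := add_le_add hterm1 hterm2
        _ = C * y := by rw [hCdef]; ring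
    have hmeasI : MeasurableSet I := by rw [hI]; exact measurableSet_Icc
    have hae : ∀ᵐ x ∂(volume.restrict I),
        ‖(1 / (y:ℂ)) * Complex.log (1 + (y:ℂ) * g x y) - g x 0‖ ≤ C * y := by
      filter_upwards [ae_restrict_mem hmeasI] with x hx using hpt x hx
    have hle := eLpNorm_le_of_ae_bound (p := 2) hae
    rw [Measure.restrict_apply_univ] at hle
    refine hle.trans ?_
    have htoReal : (2 : ENNReal).toReal⁻¹ = (2⁻¹ : ℝ) := by norm_num
    rw [htoReal]
    have hVeq : volume I = ENNReal.ofReal V := by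
      rw [hVdef, ENNReal.ofReal_toReal hVlt.ne]
    rw [hVeq, ENNReal.ofReal_rpow_of_nonneg hV0 (by norm_num : (0:ℝ) ≤ 2⁻¹),
      ← ENNReal.ofReal_mul (by positivity)]
    exact ENNReal.ofReal_le_ofReal (le_of_eq (mul_assoc _ _ _).symm)
end

section
/- In the directed inhomogeneous random graph model conditioned on bank 1 having type t, let f^{(N)}(k₁,k₂ | t) := E[e^{i k₁ d⁻ + i k₂ d⁺}] be the joint characteristic function of the in-degree d⁻ := Σ_{w=2}^N I_{w1} and out-degree d⁺ := Σ_{w=2}^N I_{1w}. Define λ⁻(t) := Σ_{t'∈[M]} P(t') κ(t',t) and λ⁺(t) := Σ_{t'∈[M]} P(t') κ(t,t'). Then there exists a constant C, depending only on M, P and κ (not on N, k₁, k₂ or t), such that for all N ≥ 2 with max_{s,s'} κ(s,s') ≤ N−1, all k₁,k₂ ∈ ℝ and all t ∈ [M]: | f^{(N)}(k₁,k₂ | t) − exp( λ⁻(t)(e^{i k₁} − 1) + λ⁺(t)(e^{i k₂} − 1) ) | ≤ C/(N−1). (The limiting function is the joint characteristic function of a pair of independent Poisson random variables with means λ⁻(t)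 and λ⁺(t).) -/
open MeasureTheory ProbabilityTheory

/-- The uniform distribution on `[0,1]`. -/
noncomputable def unif01 : Measure ℝ := volume.restrict (Set.Icc (0:ℝ) 1)

/-- The law of a bank type: the discrete measure on `[M]` with mass function `P`. -/
noncomputable def typeMeasure (M : ℕ) (P : Fin M → ℝ) : Measure (Fin M) :=
  ∑ s, ENNReal.ofReal (P s) • Measure.dirac s

instance : IsProbabilityMeasure unif01 :=
  ⟨by simp [unif01, Real.volume_Icc]⟩

lemma typeMeasure_prob (M : ℕ) (P : Fin M → ℝ) (hP0 : ∀ s, 0 ≤ P s)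
    (hP1 : ∑ s, P s = 1) : IsProbabilityMeasure (typeMeasure M P) := by
  constructor
  rw [typeMeasure]
  simp only [Measure.finset_sum_apply, Measure.smul_apply,
    Measure.dirac_apply' _ MeasurableSet.univ,
    Set.mem_univ, Set.indicator_of_mem, Pi.one_apply, smul_eq_mul, mul_one]
  rw [← ENNReal.ofReal_sum_of_nonneg (fun s _ => hP0 s), hP1, ENNReal.ofReal_one]

lemma integral_unif01_ite (p : ℝ) (hp0 : 0 ≤ p) (hp1 : p ≤ 1) (c : ℂ) :
    ∫ u, (if u ≤ p then c else 1) ∂unif01 = 1 + p * (c - 1) := by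
  have hpt : (fun u : ℝ => if u ≤ p then c else 1)
      = fun u => Set.indicator (Set.Iic p) (fun _ => c - 1) u + 1 := by
    funext u
    by_cases h : u ≤ p <;> simp [Set.indicator, h]
  rw [hpt]
  rw [integral_add ((integrable_const (c-1)).indicator measurableSet_Iic) (integrable_const 1)]
  rw [integral_indicator_const (c-1) measurableSet_Iic]
  have hmeas : unif01 (Set.Iic p) = ENNReal.ofReal p := by
    rw [unif01, Measure.restrict_apply measurableSet_Iic]
    have : Set.Iic p ∩ Set.Icc (0:ℝ) 1 = Set.Icc 0 p := by
      ext x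
      simp only [Set.mem_inter_iff, Set.mem_Iic, Set.mem_Icc]
      constructor
      · rintro ⟨h1, h2, h3⟩; exact ⟨h2, h1⟩
      · rintro ⟨h1, h2⟩; exact ⟨h2, h1, h2.trans hp1⟩
    rw [this, Real.volume_Icc]
    simp
  rw [measureReal_def, hmeas, ENNReal.toReal_ofReal hp0]
  simp [integral_const]
  ring

lemma integral_typeMeasure (M : ℕ) (P : Fin M → ℝ) (hP0 : ∀ s, 0 ≤ P s)
    (f : Fin M → ℂ) :
    ∫ s, f s ∂(typeMeasure M P) = ∑ s, (P s : ℂ) * f s := by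
  rw [typeMeasure, integral_finset_sum_measure (fun s _ => ?_)]
  · refine Finset.sum_congr rfl fun s _ => ?_
    rw [integral_smul_measure, integral_dirac, ENNReal.toReal_ofReal (hP0 s)]
    rw [Complex.real_smul]
  · have h1 : Integrable f (Measure.dirac s) :=
      (integrable_const (f s)).congr (MeasureTheory.ae_eq_dirac f).symm
    exact h1.smul_measure ENNReal.ofReal_ne_top

lemma abs_pow_sub_pow_le' (a b : ℂ) (ha : ‖a‖ ≤ 1) (hb : ‖b‖ ≤ 1) :
    ∀ n : ℕ, ‖a ^ n - b ^ n‖ ≤ n * ‖a - b‖ := by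
  intro n
  induction n with
  | zero => simp
  | succ n ih =>
    have key : a ^ (n+1) - b ^ (n+1) = a * (a ^ n - b ^ n) + (a - b) * b ^ n := by ring
    rw [key]
    calc ‖a * (a ^ n - b ^ n) + (a - b) * b ^ n‖
        ≤ ‖a * (a ^ n - b ^ n)‖ + ‖(a - b) * b ^ n‖ :=
          norm_add_le _ _
      _ = ‖a‖ * ‖a ^ n - b ^ n‖
          + ‖a - b‖ * ‖b‖ ^ n := by
          simp [norm_mul, norm_pow]
      _ ≤ 1 * (n * ‖a - b‖)
          + ‖a - b‖ * 1 := by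
          have h1 : ‖a ^ n - b ^ n‖ ≤ n * ‖a - b‖ := ih
          have h2 : ‖b‖ ^ n ≤ 1 := pow_le_one₀ (norm_nonneg _) hb
          have h3 : (0:ℝ) ≤ ‖a - b‖ := norm_nonneg _
          exact add_le_add
            (mul_le_mul ha h1 (norm_nonneg _) (by positivity))
            (mul_le_mul_of_nonneg_left h2 h3)
      _ = (n + 1 : ℕ) * ‖a - b‖ := by push_cast; ring

lemma pow_sub_exp_bound (n : ℕ) (hn : 1 ≤ n) (a z r : ℂ) (B B' : ℝ)
    (hB : 0 ≤ B) (hB' : 0 ≤ B')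
    (ha : ‖a‖ ≤ 1) (hzre : z.re ≤ 0) (hzB : ‖z‖ ≤ B)
    (hrB : ‖r‖ ≤ B')
    (heq : a = 1 + z / n + r / (n^2 : ℕ)) :
    ‖a ^ n - Complex.exp z‖ ≤ (B^2 + B' + 2*B) / n := by
  have hn0 : (0:ℝ) < n := by exact_mod_cast hn
  have hnne : (n:ℂ) ≠ 0 := by exact_mod_cast hn0.ne'
  have hez : ‖Complex.exp z‖ ≤ 1 := by
    rw [Complex.norm_exp]; exact Real.exp_le_one_iff.mpr hzre
  by_cases hcase : ‖z‖ ≤ n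
  · set b := Complex.exp (z / n) with hbdef
    have hbn : b ^ n = Complex.exp z := by
      rw [hbdef, ← Complex.exp_nat_mul]
      congr 1
      rw [mul_div_cancel₀ _ hnne]
    have hb1 : ‖b‖ ≤ 1 := by
      rw [hbdef, Complex.norm_exp]
      apply Real.exp_le_one_iff.mpr
      rw [Complex.div_natCast_re]
      exact div_nonpos_of_nonpos_of_nonneg hzre hn0.le
    have habs : ‖z / n‖ ≤ 1 := by
      rw [norm_div, Complex.norm_natCast]
      exact div_le_one_of_le₀ hcase hn0.le
    have hexp : ‖Complex.exp (z/n) - 1 - z/n‖ ≤ ‖z/n‖ ^ 2 :=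
      Complex.norm_exp_sub_one_sub_id_le habs
    have hab : ‖a - b‖ ≤ (B^2 + B') / n^2 := by
      have hdecomp : a - b = (r / (n^2:ℕ)) - (Complex.exp (z/n) - 1 - z/n) := by
        rw [heq, hbdef]; ring
      rw [hdecomp]
      calc ‖(r / (n^2:ℕ)) - (Complex.exp (z/n) - 1 - z/n)‖
          ≤ ‖r / (n^2:ℕ)‖ + ‖Complex.exp (z/n) - 1 - z/n‖ :=
            norm_sub_le _ _
        _ ≤ B' / n^2 + ‖z/n‖ ^ 2 := by
            gcongr
            rw [norm_div, Complex.norm_natCast]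
            push_cast
            gcongr
        _ ≤ B' / n^2 + B^2 / n^2 := by
            gcongr _ + ?_
            rw [norm_div, Complex.norm_natCast, div_pow]
            gcongr
        _ = (B^2 + B') / n^2 := by ring
    calc ‖a ^ n - Complex.exp z‖
        = ‖a ^ n - b ^ n‖ := by rw [hbn]
      _ ≤ n * ‖a - b‖ := abs_pow_sub_pow_le' a b ha hb1 n
      _ ≤ n * ((B^2 + B') / n^2) := by gcongr
      _ = (B^2 + B') / n := by field_simp
      _ ≤ (B^2 + B' + 2*B) / n := by
          exact div_le_div_of_nonneg_right (by linarith) hn0.le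
  · push_neg at hcase
    have hnB : (n:ℝ) ≤ B := le_trans hcase.le hzB
    calc ‖a ^ n - Complex.exp z‖
        ≤ ‖a ^ n‖ + ‖Complex.exp z‖ := norm_sub_le _ _
      _ ≤ 1 + 1 := by
          gcongr
          rw [norm_pow]
          exact pow_le_one₀ (norm_nonneg _) ha
      _ ≤ 2 * B / n := by
          rw [le_div_iff₀ hn0]
          nlinarith
      _ ≤ (B^2 + B' + 2*B) / n := by
          gcongr ?_ / n
          nlinarith

lemma integral_pi_prod_pow {α : Type*} [MeasurableSpace α] (ν : Measure α)
    [IsProbabilityMeasure ν] (n : ℕ) (g : α → ℂ) :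
    ∫ v : Fin n → α, ∏ i, g (v i) ∂(Measure.pi fun _ => ν) = (∫ x, g x ∂ν) ^ n := by
  letI : MeasureSpace α := ⟨ν⟩
  haveI : IsProbabilityMeasure (volume : Measure α) := ‹IsProbabilityMeasure ν›
  have h := MeasureTheory.integral_fintype_prod_eq_pow (𝕜 := ℂ) (ι := Fin n) g (μ := (volume : Measure α))
  rw [Fintype.card_fin] at h
  calc ∫ v : Fin n → α, ∏ i, g (v i) ∂(Measure.pi fun _ => ν)
      = ∫ v : Fin n → α, ∏ i, g (v i) := by rw [MeasureTheory.volume_pi]; rfl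
    _ = (∫ x, g x ∂ν) ^ n := h

set_option maxHeartbeats 3200000 in
/-- There is a constant `C = C(M,P,κ)`, not depending on `N`, `k₁`, `k₂` or
`t`, such that the joint characteristic function `f^{(N)}(k₁,k₂∣t)` of the in/out degree of
bank 1 in the directed inhomogeneous random graph satisfies
`|f^{(N)}(k₁,k₂∣t) − exp(λ⁻(t)(e^{ik₁}−1) + λ⁺(t)(e^{ik₂}−1))| ≤ C/(N−1)`,
where `λ⁻(t) = Σ_{t'} P(t')κ(t',t)` and `λ⁺(t) = Σ_{t'} P(t')κ(t,t')`. -/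
theorem stmt2
    (M : ℕ) (hM : 2 ≤ M)
    (P : Fin M → ℝ) (hP0 : ∀ s, 0 ≤ P s) (hP1 : ∑ s, P s = 1)
    (κ : Fin M → Fin M → ℝ) (hκ0 : ∀ s s', 0 ≤ κ s s') :
    ∃ C : ℝ, ∀ (N : ℕ), 2 ≤ N → (∀ s s', κ s s' ≤ (N : ℝ) - 1) →
    ∀ (Ω : Type) (_ : MeasurableSpace Ω) (μ : Measure Ω), IsProbabilityMeasure μ →
    ∀ (T : Fin (N - 1) → Ω → Fin M) (U U' : Fin (N - 1) → Ω → ℝ),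
    -- the `(T_w, U_w, U'_w)`, `w = 2,…,N`, are i.i.d. with `T_w ~ P`,
    -- `U_w, U'_w ~ Uniform[0,1]`, all three independent:
    (Measure.map (fun ω => fun w : Fin (N - 1) => (T w ω, U w ω, U' w ω)) μ
      = Measure.pi (fun _ : Fin (N - 1) => (typeMeasure M P).prod (unif01.prod unif01))) →
    ∀ (k₁ k₂ : ℝ) (t : Fin M),
    ‖((∫ ω, Complex.exp (Complex.I * (k₁ : ℂ) *
            ((∑ w : Fin (N - 1), if U w ω ≤ κ (T w ω) t / ((N : ℝ) - 1) then (1:ℝ) else 0) : ℝ)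
          + Complex.I * (k₂ : ℂ) *
            ((∑ w : Fin (N - 1), if U' w ω ≤ κ t (T w ω) / ((N : ℝ) - 1) then (1:ℝ) else 0) : ℝ)) ∂μ)
        - Complex.exp
            (((∑ t' : Fin M, P t' * κ t' t : ℝ) : ℂ) * (Complex.exp (Complex.I * (k₁ : ℂ)) - 1)
           + ((∑ t' : Fin M, P t' * κ t t' : ℝ) : ℂ) * (Complex.exp (Complex.I * (k₂ : ℂ)) - 1)))‖
      ≤ C / ((N : ℝ) - 1) := by
  classical
  set K : ℝ := ∑ s, ∑ s', κ s s' with hKdef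
  have hK0 : 0 ≤ K := Finset.sum_nonneg fun s _ => Finset.sum_nonneg fun s' _ => hκ0 s s'
  have hκK : ∀ s s', κ s s' ≤ K := by
    intro s s'
    calc κ s s' ≤ ∑ s'', κ s s'' :=
          Finset.single_le_sum (fun i _ => hκ0 s i) (Finset.mem_univ s')
      _ ≤ K := Finset.single_le_sum (f := fun i => ∑ s'', κ i s'')
          (fun i _ => Finset.sum_nonneg fun j _ => hκ0 i j) (Finset.mem_univ s)
  refine ⟨20*K^2 + 8*K, ?_⟩
  intro N hN hκN Ω mΩ μ hμ T U U' hmap k₁ k₂ t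
  haveI := typeMeasure_prob M P hP0 hP1
  set ν : Measure (Fin M × ℝ × ℝ) := (typeMeasure M P).prod (unif01.prod unif01) with hνdef
  haveI : IsProbabilityMeasure ν := by rw [hνdef]; infer_instance
  have hn1 : 1 ≤ N - 1 := by omega
  have hNr : ((N : ℝ) - 1) = ((N - 1 : ℕ) : ℝ) := by
    rw [Nat.cast_sub (by omega : 1 ≤ N)]
    simp
  have hnr0 : (0:ℝ) < ((N - 1 : ℕ):ℝ) := by exact_mod_cast hn1
  set E₁ : ℂ := Complex.exp (Complex.I * (k₁ : ℂ)) with hE₁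
  set E₂ : ℂ := Complex.exp (Complex.I * (k₂ : ℂ)) with hE₂
  have habsE₁ : ‖E₁‖ = 1 := by
    rw [hE₁, Complex.norm_exp]
    simp [Complex.mul_re]
  have habsE₂ : ‖E₂‖ = 1 := by
    rw [hE₂, Complex.norm_exp]
    simp [Complex.mul_re]
  set g : Fin M × ℝ × ℝ → ℂ := fun x =>
    (if x.2.1 ≤ κ x.1 t / ((N:ℝ) - 1) then E₁ else 1)
      * (if x.2.2 ≤ κ t x.1 / ((N:ℝ) - 1) then E₂ else 1) with hgdef
  -- probabilities
  have hp0 : ∀ s s', 0 ≤ κ s s' / ((N:ℝ) - 1) := fun s s' =>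
    div_nonneg (hκ0 s s') (by rw [hNr]; exact hnr0.le)
  have hp1 : ∀ s s', κ s s' / ((N:ℝ) - 1) ≤ 1 := fun s s' => by
    rw [div_le_one (by rw [hNr]; exact hnr0)]
    exact hκN s s'
  -- measurability of g
  have hg : Measurable g := by
    apply Measurable.mul
    · refine Measurable.ite ?_ measurable_const measurable_const
      exact measurableSet_le (measurable_fst.comp measurable_snd)
        ((measurable_of_finite (fun s : Fin M => κ s t / ((N:ℝ) - 1))).comp measurable_fst)
    · refine Measurable.ite ?_ measurable_const measurable_const
      exact measurableSet_le (measurable_snd.comp measurable_snd)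
        ((measurable_of_finite (fun s : Fin M => κ t s / ((N:ℝ) - 1))).comp measurable_fst)
  have hgabs : ∀ x, ‖g x‖ ≤ 1 := by
    intro x
    rw [hgdef]
    simp only [norm_mul]
    have h1 : ‖if x.2.1 ≤ κ x.1 t / ((N:ℝ) - 1) then E₁ else 1‖ ≤ 1 := by
      split_ifs <;> simp [habsE₁]
    have h2 : ‖if x.2.2 ≤ κ t x.1 / ((N:ℝ) - 1) then E₂ else 1‖ ≤ 1 := by
      split_ifs <;> simp [habsE₂]
    calc ‖_‖ * ‖_‖ ≤ 1 * 1 :=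
          mul_le_mul h1 h2 (norm_nonneg _) zero_le_one
      _ = 1 := mul_one 1
  have hgint : Integrable g ν :=
    (integrable_const (1:ℝ)).mono' hg.aestronglyMeasurable
      (Filter.Eventually.of_forall fun x => by
        simpa using hgabs x)
  -- step 1: the integral equals (∫ g dν)^n
  set φ : Ω → (Fin (N-1) → Fin M × ℝ × ℝ) := fun ω w => (T w ω, U w ω, U' w ω) with hφdef
  have hφae : AEMeasurable φ μ := by
    by_contra h
    rw [Measure.map_of_not_aemeasurable h] at hmap
    haveI : IsProbabilityMeasure
        (Measure.pi fun _ : Fin (N-1) => (typeMeasure M P).prod (unif01.prod unif01)) := by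
      infer_instance
    have h0 := congrArg (fun m : Measure (Fin (N-1) → Fin M × ℝ × ℝ) => m Set.univ) hmap
    simp [measure_univ] at h0
  have hGm : Measurable (fun v : Fin (N-1) → Fin M × ℝ × ℝ => ∏ w, g (v w)) :=
    Finset.measurable_prod _ fun w _ => hg.comp (measurable_pi_apply w)
  have hint_eq : ∀ ω : Ω,
      Complex.exp (Complex.I * (k₁ : ℂ) *
            ((∑ w : Fin (N - 1), if U w ω ≤ κ (T w ω) t / ((N : ℝ) - 1) then (1:ℝ) else 0) : ℝ)
          + Complex.I * (k₂ : ℂ) *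
            ((∑ w : Fin (N - 1), if U' w ω ≤ κ t (T w ω) / ((N : ℝ) - 1) then (1:ℝ) else 0) : ℝ))
        = ∏ w, g (φ ω w) := by
    intro ω
    have hc1 : ((∑ w : Fin (N - 1), if U w ω ≤ κ (T w ω) t / ((N : ℝ) - 1)
        then (1:ℝ) else 0 : ℝ) : ℂ)
        = ∑ w : Fin (N-1), (if U w ω ≤ κ (T w ω) t / ((N : ℝ) - 1) then (1:ℂ) else 0) := by
      push_cast
      exact Finset.sum_congr rfl fun w _ => by split_ifs <;> simp
    have hc2 : ((∑ w : Fin (N - 1), if U' w ω ≤ κ t (T w ω) / ((N : ℝ) - 1)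
        then (1:ℝ) else 0 : ℝ) : ℂ)
        = ∑ w : Fin (N-1), (if U' w ω ≤ κ t (T w ω) / ((N : ℝ) - 1) then (1:ℂ) else 0) := by
      push_cast
      exact Finset.sum_congr rfl fun w _ => by split_ifs <;> simp
    rw [hc1, hc2, Finset.mul_sum, Finset.mul_sum, ← Finset.sum_add_distrib,
      Complex.exp_sum]
    refine Finset.prod_congr rfl fun w _ => ?_
    rw [hgdef]
    simp only [hφdef]
    split_ifs <;>
      simp [Complex.exp_add, hE₁, hE₂, mul_zero, mul_one, Complex.exp_zero]
  have step1 :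
      (∫ ω, Complex.exp (Complex.I * (k₁ : ℂ) *
            ((∑ w : Fin (N - 1), if U w ω ≤ κ (T w ω) t / ((N : ℝ) - 1) then (1:ℝ) else 0) : ℝ)
          + Complex.I * (k₂ : ℂ) *
            ((∑ w : Fin (N - 1), if U' w ω ≤ κ t (T w ω) / ((N : ℝ) - 1) then (1:ℝ) else 0) : ℝ)) ∂μ)
        = (∫ x, g x ∂ν) ^ (N - 1) := by
    calc (∫ ω, Complex.exp (Complex.I * (k₁ : ℂ) *
            ((∑ w : Fin (N - 1), if U w ω ≤ κ (T w ω) t / ((N : ℝ) - 1) then (1:ℝ) else 0) : ℝ)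
          + Complex.I * (k₂ : ℂ) *
            ((∑ w : Fin (N - 1), if U' w ω ≤ κ t (T w ω) / ((N : ℝ) - 1) then (1:ℝ) else 0) : ℝ)) ∂μ)
        = ∫ ω, (∏ w, g (φ ω w)) ∂μ := by
          exact integral_congr_ae (Filter.Eventually.of_forall hint_eq)
      _ = ∫ v, (∏ w, g (v w)) ∂(Measure.map φ μ) :=
          (integral_map hφae hGm.aestronglyMeasurable).symm
      _ = ∫ v, (∏ w, g (v w)) ∂(Measure.pi fun _ : Fin (N-1) => ν) := by rw [hmap]
      _ = (∫ x, g x ∂ν) ^ (N-1) := integral_pi_prod_pow ν (N-1) g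
  -- step 2: compute the one-coordinate integral
  have hdc : (((N - 1 : ℕ)) : ℂ) = (N:ℂ) - 1 := by
    rw [Nat.cast_sub (by omega : 1 ≤ N)]; simp
  have hdne : ((N:ℂ) - 1) ≠ 0 := by
    rw [← hdc]
    exact_mod_cast Nat.cast_ne_zero.mpr (by omega : (N - 1 : ℕ) ≠ 0)
  have hinner : ∀ s : Fin M,
      (∫ y : ℝ × ℝ, g (s, y) ∂(unif01.prod unif01))
        = (1 + ((κ s t / ((N:ℝ)-1) : ℝ) : ℂ) * (E₁ - 1))
          * (1 + ((κ t s / ((N:ℝ)-1) : ℝ) : ℂ) * (E₂ - 1)) := by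
    intro s
    have hsplit : (fun y : ℝ × ℝ => g (s, y))
        = fun y : ℝ × ℝ => (fun u : ℝ => if u ≤ κ s t / ((N:ℝ)-1) then E₁ else 1) y.1
            * (fun u : ℝ => if u ≤ κ t s / ((N:ℝ)-1) then E₂ else 1) y.2 := rfl
    have hm := integral_prod_mul (μ := unif01) (ν := unif01)
      (fun u : ℝ => if u ≤ κ s t / ((N:ℝ)-1) then E₁ else 1)
      (fun u : ℝ => if u ≤ κ t s / ((N:ℝ)-1) then E₂ else 1)
    rw [hsplit, hm,
      integral_unif01_ite _ (hp0 s t) (hp1 s t) E₁,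
      integral_unif01_ite _ (hp0 t s) (hp1 t s) E₂]
  have hadef : ∫ x, g x ∂ν
      = ∑ s, (P s : ℂ) * ((1 + (κ s t : ℂ)/((N:ℂ)-1) * (E₁ - 1))
          * (1 + (κ t s : ℂ)/((N:ℂ)-1) * (E₂ - 1))) := by
    calc ∫ x, g x ∂ν
        = ∫ x, g x ∂((typeMeasure M P).prod (unif01.prod unif01)) := by rw [hνdef]
      _ = ∫ s, (∫ y : ℝ × ℝ, g (s, y) ∂(unif01.prod unif01)) ∂(typeMeasure M P) :=
          MeasureTheory.integral_prod _ (hνdef ▸ hgint)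
      _ = ∫ s, ((1 + ((κ s t / ((N:ℝ)-1) : ℝ) : ℂ) * (E₁ - 1))
            * (1 + ((κ t s / ((N:ℝ)-1) : ℝ) : ℂ) * (E₂ - 1))) ∂(typeMeasure M P) := by
          exact integral_congr_ae (Filter.Eventually.of_forall hinner)
      _ = ∑ s, (P s : ℂ) * ((1 + ((κ s t / ((N:ℝ)-1) : ℝ) : ℂ) * (E₁ - 1))
            * (1 + ((κ t s / ((N:ℝ)-1) : ℝ) : ℂ) * (E₂ - 1))) :=
          integral_typeMeasure M P hP0 _
      _ = ∑ s, (P s : ℂ) * ((1 + (κ s t : ℂ)/((N:ℂ)-1) * (E₁ - 1))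
            * (1 + (κ t s : ℂ)/((N:ℂ)-1) * (E₂ - 1))) := by
          refine Finset.sum_congr rfl fun s _ => ?_
          push_cast
          ring
  -- step 3: algebraic identification
  set lm : ℝ := ∑ s, P s * κ s t with hlm
  set lp : ℝ := ∑ s, P s * κ t s with hlp
  set z : ℂ := (lm : ℂ) * (E₁ - 1) + (lp : ℂ) * (E₂ - 1) with hz
  set r : ℂ := ((∑ s, P s * (κ s t * κ t s) : ℝ) : ℂ) * ((E₁ - 1) * (E₂ - 1)) with hr
  have hsum1 : (∑ s, (P s : ℂ)) = 1 := by exact_mod_cast hP1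
  have hRHS : (1:ℂ) + z / ((N - 1 : ℕ) : ℂ) + r / (((N-1)^2 : ℕ) : ℂ)
      = ∑ s, (P s : ℂ) * ((1 + (κ s t : ℂ)/((N:ℂ)-1) * (E₁ - 1))
          * (1 + (κ t s : ℂ)/((N:ℂ)-1) * (E₂ - 1))) := by
    calc (1:ℂ) + z / ((N - 1 : ℕ) : ℂ) + r / (((N-1)^2 : ℕ) : ℂ)
        = (∑ s, (P s : ℂ)) + z / ((N - 1 : ℕ) : ℂ) + r / (((N-1)^2 : ℕ) : ℂ) := by
          rw [hsum1]
      _ = (∑ s, (P s : ℂ)) + ((∑ s, (P s : ℂ) * (κ s t : ℂ)) * (E₁ - 1)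
            + (∑ s, (P s : ℂ) * (κ t s : ℂ)) * (E₂ - 1)) / ((N:ℂ)-1)
            + ((∑ s, (P s : ℂ) * ((κ s t : ℂ) * (κ t s : ℂ))) * ((E₁-1) * (E₂-1)))
              / ((N:ℂ)-1)^2 := by
          have h2 : (((N-1)^2 : ℕ) : ℂ) = ((N:ℂ)-1)^2 := by
            push_cast [hdc]
            ring
          rw [hz, hr, hlm, hlp, hdc, h2]
          push_cast
          ring
      _ = ∑ s, (P s : ℂ) * ((1 + (κ s t : ℂ)/((N:ℂ)-1) * (E₁ - 1))
            * (1 + (κ t s : ℂ)/((N:ℂ)-1) * (E₂ - 1))) := by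
          simp only [Finset.sum_mul, Finset.sum_div, ← Finset.sum_add_distrib]
          refine Finset.sum_congr rfl fun s _ => ?_
          field_simp
          ring
  have heq : (∫ x, g x ∂ν)
      = 1 + z / ((N - 1 : ℕ) : ℂ) + r / (((N-1)^2 : ℕ) : ℂ) := by
    rw [hadef, hRHS]
  -- step 4: the bounds
  have habs_a : ‖∫ x, g x ∂ν‖ ≤ 1 := by
    have h := norm_integral_le_of_norm_le_const (μ := ν) (f := g) (C := 1)
      (Filter.Eventually.of_forall fun x => by
        simpa using hgabs x)
    simpa [measure_univ] using h
  have habsA : ‖E₁ - 1‖ ≤ 2 := by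
    calc ‖E₁ - 1‖ ≤ ‖E₁‖ + ‖(1:ℂ)‖ := norm_sub_le _ _
      _ = 2 := by rw [habsE₁]; simp; norm_num
  have habsB : ‖E₂ - 1‖ ≤ 2 := by
    calc ‖E₂ - 1‖ ≤ ‖E₂‖ + ‖(1:ℂ)‖ := norm_sub_le _ _
      _ = 2 := by rw [habsE₂]; simp; norm_num
  have hPle1 : ∀ s, P s ≤ 1 := by
    intro s
    rw [← hP1]
    exact Finset.single_le_sum (fun i _ => hP0 i) (Finset.mem_univ s)
  have hlm0 : 0 ≤ lm := Finset.sum_nonneg fun s _ => mul_nonneg (hP0 s) (hκ0 s t)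
  have hlp0 : 0 ≤ lp := Finset.sum_nonneg fun s _ => mul_nonneg (hP0 s) (hκ0 t s)
  have hlmK : lm ≤ K := by
    calc lm ≤ ∑ s, κ s t := Finset.sum_le_sum fun s _ =>
          mul_le_of_le_one_left (hκ0 s t) (hPle1 s)
      _ ≤ ∑ s, ∑ s', κ s s' := Finset.sum_le_sum fun s _ =>
          Finset.single_le_sum (fun j _ => hκ0 s j) (Finset.mem_univ t)
      _ = K := hKdef.symm
  have hlpK : lp ≤ K := by
    calc lp ≤ ∑ s, κ t s := Finset.sum_le_sum fun s _ =>
          mul_le_of_le_one_left (hκ0 t s) (hPle1 s)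
      _ ≤ K := by
          rw [hKdef]
          exact Finset.single_le_sum (f := fun i => ∑ s', κ i s')
            (fun i _ => Finset.sum_nonneg fun j _ => hκ0 i j) (Finset.mem_univ t)
  have hzabs : ‖z‖ ≤ 4 * K := by
    calc ‖z‖
        ≤ ‖(lm : ℂ) * (E₁ - 1)‖ + ‖(lp : ℂ) * (E₂ - 1)‖ := by
          rw [hz]; exact norm_add_le _ _
      _ = lm * ‖E₁ - 1‖ + lp * ‖E₂ - 1‖ := by
          rw [norm_mul, norm_mul, Complex.norm_real, Complex.norm_real, Real.norm_eq_abs, Real.norm_eq_abs,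
            abs_of_nonneg hlm0, abs_of_nonneg hlp0]
      _ ≤ K * 2 + K * 2 :=
          add_le_add (mul_le_mul hlmK habsA (norm_nonneg _) hK0)
            (mul_le_mul hlpK habsB (norm_nonneg _) hK0)
      _ = 4 * K := by ring
  have hE₁re : E₁.re = Real.cos k₁ := by
    rw [hE₁, Complex.exp_re]
    simp [Complex.mul_re, Complex.mul_im]
  have hE₂re : E₂.re = Real.cos k₂ := by
    rw [hE₂, Complex.exp_re]
    simp [Complex.mul_re, Complex.mul_im]
  have hzre : z.re ≤ 0 := by
    rw [hz]
    rw [Complex.add_re, Complex.re_ofReal_mul, Complex.re_ofReal_mul,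
      Complex.sub_re, Complex.sub_re, Complex.one_re, hE₁re, hE₂re]
    have h1 : Real.cos k₁ - 1 ≤ 0 := by nlinarith [Real.cos_le_one k₁]
    have h2 : Real.cos k₂ - 1 ≤ 0 := by nlinarith [Real.cos_le_one k₂]
    nlinarith
  have hρ0 : 0 ≤ ∑ s, P s * (κ s t * κ t s) :=
    Finset.sum_nonneg fun s _ => mul_nonneg (hP0 s) (mul_nonneg (hκ0 s t) (hκ0 t s))
  have hρK : (∑ s, P s * (κ s t * κ t s)) ≤ K^2 := by
    calc (∑ s, P s * (κ s t * κ t s)) ≤ ∑ s, P s * K^2 := by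
          refine Finset.sum_le_sum fun s _ => ?_
          refine mul_le_mul_of_nonneg_left ?_ (hP0 s)
          calc κ s t * κ t s ≤ K * K :=
                mul_le_mul (hκK s t) (hκK t s) (hκ0 t s) hK0
            _ = K^2 := (sq K).symm
      _ = K^2 := by rw [← Finset.sum_mul, hP1, one_mul]
  have hrabs : ‖r‖ ≤ 4 * K^2 := by
    calc ‖r‖
        = |∑ s, P s * (κ s t * κ t s)| * ‖(E₁ - 1) * (E₂ - 1)‖ := by
          rw [hr, norm_mul, Complex.norm_real, Real.norm_eq_abs]
      _ ≤ K^2 * (2 * 2) := by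
          apply mul_le_mul
          · rw [abs_of_nonneg hρ0]; exact hρK
          · rw [norm_mul]
            exact mul_le_mul habsA habsB (norm_nonneg _) (by norm_num)
          · exact norm_nonneg _
          · positivity
      _ = 4 * K^2 := by ring
  -- step 5: conclusion
  have hfinal := pow_sub_exp_bound (N-1) hn1 (∫ x, g x ∂ν) z r (4*K) (4*K^2)
    (by positivity) (by positivity) habs_a hzre hzabs hrabs heq
  rw [step1, hNr]
  calc ‖(∫ x, g x ∂ν) ^ (N-1) - Complex.exp z‖
      ≤ ((4*K)^2 + 4*K^2 + 2*(4*K)) / ((N-1 : ℕ) : ℝ) := hfinal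
    _ = (20*K^2 + 8*K) / ((N-1 : ℕ) : ℝ) := by ring_nf
end

section
/- Let G : [0,∞) × ℝ × [0,∞) → ℝ be a bounded measurable shock transmission function satisfying G(x,y,0) = 0 for all x,y, and G(x,y,z) = 0 whenever y ≥ 0. Let X, Y, Ω, B be mutually independent random variables, where X ≥ 0, Ω ≥ 0, Y has a probability density ρ_Y with respect to Lebesgue measure on ℝ, and B is Bernoulli with parameter p ∈ [0,1]. Define h(k,y) := E[e^{i k G(X, y, Ω)}] (the expectation over X and Ω with y fixed). Then for every k ∈ ℝ: E[ e^{i k G(X, Y, B·Ω)} ] = 1 + p · ∫_{−∞}^0 ρ_Y(y) ( h(k,y) − 1 ) dy. -/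
open MeasureTheory ProbabilityTheory

open scoped NNReal ENNReal

noncomputable def cek (k r : ℝ) : ℂ := Complex.exp (Complex.I * k * r)

lemma cek_norm (k r : ℝ) : ‖cek k r‖ = 1 := by
  rw [cek, Complex.norm_exp]
  have : (Complex.I * k * r).re = 0 := by simp
  rw [this, Real.exp_zero]

lemma cek_meas (k : ℝ) : Measurable (cek k) := by unfold cek; fun_prop

lemma cek_zero (k : ℝ) : cek k 0 = 1 := by simp [cek]

lemma integrable_of_norm_le_one {α : Type*} [MeasurableSpace α] {ν : Measure α}
    [IsFiniteMeasure ν] {f : α → ℂ} (hf : AEStronglyMeasurable f ν)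
    (h : ∀ a, ‖f a‖ ≤ 1) : Integrable f ν :=
  (integrable_const 1).mono' hf (Filter.Eventually.of_forall h)



/-- For a bounded measurable shock transmission function `G` with
`G(x,y,0) = 0` and `G(x,y,z) = 0` for `y ≥ 0`, and mutually independent `X, Y, Ω, B` with
`X, Ω ≥ 0`, `Y` having density `ρ_Y` and `B` Bernoulli(`p`), one has
`E[e^{ikG(X,Y,B·Ω)}] = 1 + p ∫_{−∞}^0 ρ_Y(y)(h(k,y) − 1) dy`, where
`h(k,y) = E[e^{ikG(X,y,Ω)}]`. -/
theorem stmt7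
    (Ωs : Type) [MeasurableSpace Ωs] (μ : Measure Ωs) [IsProbabilityMeasure μ]
    (G : ℝ → ℝ → ℝ → ℝ)
    (hGmeas : Measurable fun q : ℝ × ℝ × ℝ => G q.1 q.2.1 q.2.2)
    (CG : ℝ) (hGbd : ∀ x y z, |G x y z| ≤ CG)
    (hG0 : ∀ x y, 0 ≤ x → G x y 0 = 0)
    (hGy : ∀ x y z, 0 ≤ x → 0 ≤ z → 0 ≤ y → G x y z = 0)
    (X Y O B : Ωs → ℝ)
    (hXm : Measurable X) (hYm : Measurable Y) (hOm : Measurable O) (hBm : Measurable B)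
    (hX0 : ∀ ω, 0 ≤ X ω) (hO0 : ∀ ω, 0 ≤ O ω)
    -- `X, Y, Ω, B` are mutually independent:
    (hindep : iIndepFun ![X, Y, O, B] μ)
    (ρY : ℝ → ℝ) (hρm : Measurable ρY) (hρ0 : ∀ y, 0 ≤ ρY y)
    -- `Y` has density `ρ_Y` with respect to Lebesgue measure:
    (hYlaw : Measure.map Y μ = volume.withDensity fun y => ENNReal.ofReal (ρY y))
    (p : ℝ) (hp : p ∈ Set.Icc (0:ℝ) 1)
    -- `B` is Bernoulli with parameter `p`:
    (hBlaw : Measure.map B μ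
      = ENNReal.ofReal p • Measure.dirac (1:ℝ) + ENNReal.ofReal (1 - p) • Measure.dirac 0)
    (k : ℝ) :
    ∫ ω, Complex.exp (Complex.I * (k : ℂ) * (G (X ω) (Y ω) (B ω * O ω) : ℝ)) ∂μ
      = 1 + (p : ℂ) * ∫ y in Set.Iio (0:ℝ),
          (ρY y : ℂ) *
            ((∫ ω, Complex.exp (Complex.I * (k : ℂ) * (G (X ω) y (O ω) : ℝ)) ∂μ) - 1) := by
  obtain ⟨hp0, hp1⟩ := hp
  have hcm := cek_meas k
  have hcn := cek_norm k
  -- independence facts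
  have hfmeas : ∀ i, Measurable (![X, Y, O, B] i) := by
    intro i; fin_cases i <;> assumption
  have hWB : IndepFun (fun ω => (X ω, Y ω, O ω)) B μ := by
    classical
    exact (hindep.indepFun_finset {0, 1, 2} {3} (by decide) hfmeas).comp
      (φ := fun v : ((i : ({0,1,2} : Finset (Fin 4))) → ℝ) =>
        (v ⟨0, by decide⟩, v ⟨1, by decide⟩, v ⟨2, by decide⟩))
      (ψ := fun v : ((i : ({3} : Finset (Fin 4))) → ℝ) => v ⟨3, by decide⟩)
      (by fun_prop) (measurable_pi_apply _)
  have hYV : IndepFun Y (fun ω => (X ω, O ω)) μ :=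
    (hindep.indepFun_prodMk hfmeas 0 2 1 (by decide) (by decide)).symm
  have hWm : Measurable (fun ω => (X ω, Y ω, O ω)) := by fun_prop
  have hVm : Measurable (fun ω => (X ω, O ω)) := by fun_prop
  haveI : IsProbabilityMeasure (μ.map (fun ω => (X ω, Y ω, O ω))) :=
    Measure.isProbabilityMeasure_map hWm.aemeasurable
  haveI : IsProbabilityMeasure (μ.map (fun ω => (X ω, O ω))) :=
    Measure.isProbabilityMeasure_map hVm.aemeasurable
  haveI : IsProbabilityMeasure (μ.map Y) := Measure.isProbabilityMeasure_map hYm.aemeasurable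
  haveI : IsProbabilityMeasure (μ.map B) := Measure.isProbabilityMeasure_map hBm.aemeasurable
  -- h function
  set hfun : ℝ → ℂ := fun y => ∫ ω, cek k (G (X ω) y (O ω)) ∂μ with hfun_def
  have hfun_sm : StronglyMeasurable hfun := by
    have : Measurable (fun q : ℝ × Ωs => cek k (G (X q.2) q.1 (O q.2))) := by
      apply hcm.comp
      exact hGmeas.comp ((hXm.comp measurable_snd).prodMk
        (measurable_fst.prodMk (hOm.comp measurable_snd)))
    exact this.stronglyMeasurable.integral_prod_right'
  have hfun_norm : ∀ y, ‖hfun y‖ ≤ 1 := by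
    intro y
    have := norm_integral_le_of_norm_le_const (μ := μ)
      (f := fun ω => cek k (G (X ω) y (O ω))) (C := 1)
      (Filter.Eventually.of_forall fun ω => (hcn _).le)
    simpa using this
  have hfun_one : ∀ y, 0 ≤ y → hfun y = 1 := by
    intro y hy
    have h1 : ∀ ω, cek k (G (X ω) y (O ω)) = 1 := fun ω => by
      rw [hGy _ _ _ (hX0 ω) (hO0 ω) hy, cek_zero]
    simp [hfun_def, h1]
  -- density integrable, integrates to 1
  have hlin : ∫⁻ y, ENNReal.ofReal (ρY y) = 1 := by
    haveI : IsProbabilityMeasure (volume.withDensity fun y => ENNReal.ofReal (ρY y)) :=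
      hYlaw ▸ Measure.isProbabilityMeasure_map hYm.aemeasurable
    have h2 := this.measure_univ
    rwa [withDensity_apply _ MeasurableSet.univ, setLIntegral_univ] at h2
  have hρint : Integrable ρY volume :=
    (lintegral_ofReal_ne_top_iff_integrable hρm.aestronglyMeasurable
      (Filter.Eventually.of_forall hρ0)).mp (by rw [hlin]; exact ENNReal.one_ne_top)
  -- integrability of ρY • hfun
  have hsm2 : AEStronglyMeasurable (fun y => ρY y • hfun y) (volume : Measure ℝ) :=
    (hρm.aestronglyMeasurable).smul hfun_sm.aestronglyMeasurable
  have hint2 : Integrable (fun y => ρY y • hfun y) volume := by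
    refine hρint.mono' hsm2 (Filter.Eventually.of_forall fun y => ?_)
    rw [norm_smul, Real.norm_eq_abs, abs_of_nonneg (hρ0 y)]
    exact mul_le_of_le_one_right (hρ0 y) (hfun_norm y)
  -- Step 1: integrate out B
  have hmap1 : μ.map (fun ω => ((X ω, Y ω, O ω), B ω))
      = (μ.map (fun ω => (X ω, Y ω, O ω))).prod (μ.map B) :=
    (indepFun_iff_map_prod_eq_prod_map_map hWm.aemeasurable hBm.aemeasurable).mp hWB
  set F : (ℝ × ℝ × ℝ) × ℝ → ℂ := fun q => cek k (G q.1.1 q.1.2.1 (q.2 * q.1.2.2)) with hF_def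
  have hFm : Measurable F := by
    apply hcm.comp
    exact hGmeas.comp ((measurable_fst.fst).prodMk
      ((measurable_fst.snd.fst).prodMk (measurable_snd.mul measurable_fst.snd.snd)))
  have step1 : ∫ ω, cek k (G (X ω) (Y ω) (B ω * O ω)) ∂μ
      = ∫ w, ∫ b, F (w, b) ∂(μ.map B) ∂(μ.map (fun ω => (X ω, Y ω, O ω))) := by
    rw [← integral_prod F (integrable_of_norm_le_one hFm.aestronglyMeasurable
      (fun q => (hcn _).le)), ← hmap1,
      integral_map (by fun_prop) hFm.aestronglyMeasurable]
  -- compute inner B-integral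
  have hBinner : ∀ w : ℝ × ℝ × ℝ, (∫ b, F (w, b) ∂(μ.map B))
      = p • cek k (G w.1 w.2.1 w.2.2) + (1 - p) • cek k (G w.1 w.2.1 0) := by
    intro w
    have hmeas : Measurable fun b : ℝ => F (w, b) :=
      hFm.comp (measurable_const.prodMk measurable_id)
    have hi1 : Integrable (fun b : ℝ => F (w, b)) (Measure.dirac 1) :=
      integrable_of_norm_le_one hmeas.aestronglyMeasurable (fun b => (hcn _).le)
    have hi0 : Integrable (fun b : ℝ => F (w, b)) (Measure.dirac 0) :=
      integrable_of_norm_le_one hmeas.aestronglyMeasurable (fun b => (hcn _).le)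
    rw [hBlaw, integral_add_measure (hi1.smul_measure ENNReal.ofReal_ne_top)
      (hi0.smul_measure ENNReal.ofReal_ne_top),
      integral_smul_measure, integral_smul_measure, integral_dirac, integral_dirac,
      ENNReal.toReal_ofReal hp0, ENNReal.toReal_ofReal (by linarith)]
    simp [hF_def]
  have hgm : Measurable (fun w : ℝ × ℝ × ℝ =>
      p • cek k (G w.1 w.2.1 w.2.2) + (1 - p) • cek k (G w.1 w.2.1 0)) := by
    apply Measurable.add
    · exact ((hcm.comp (hGmeas.comp (measurable_fst.prodMk
        (measurable_snd.fst.prodMk measurable_snd.snd))))).const_smul p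
    · exact ((hcm.comp (hGmeas.comp (measurable_fst.prodMk
        (measurable_snd.fst.prodMk measurable_const))))).const_smul (1 - p)
  have hintA : Integrable (fun ω => cek k (G (X ω) (Y ω) (O ω))) μ :=
    integrable_of_norm_le_one ((hcm.comp (hGmeas.comp
      (hXm.prodMk (hYm.prodMk hOm)))).aestronglyMeasurable) (fun ω => (hcn _).le)
  have step2 : ∫ ω, cek k (G (X ω) (Y ω) (B ω * O ω)) ∂μ
      = (p : ℂ) * (∫ ω, cek k (G (X ω) (Y ω) (O ω)) ∂μ) + ((1 - p : ℝ) : ℂ) := by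
    rw [step1, integral_congr_ae (Filter.Eventually.of_forall hBinner),
      integral_map hWm.aemeasurable hgm.aestronglyMeasurable]
    have hptw : ∀ ω, p • cek k (G (X ω) (Y ω) (O ω)) + (1 - p) • cek k (G (X ω) (Y ω) 0)
        = p • cek k (G (X ω) (Y ω) (O ω)) + (1 - p) • (1 : ℂ) := fun ω => by
      rw [hG0 _ _ (hX0 ω), cek_zero]
    have h1 : Integrable (fun ω => p • cek k (G (X ω) (Y ω) (O ω))) μ := hintA.smul p
    rw [integral_congr_ae (Filter.Eventually.of_forall hptw),
      integral_add h1 (integrable_const _), integral_smul, integral_smul,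
      integral_const, probReal_univ]
    simp [Complex.real_smul]
  -- Step 2: integrate out Y
  have hmap2 : μ.map (fun ω => (Y ω, (X ω, O ω)))
      = (μ.map Y).prod (μ.map (fun ω => (X ω, O ω))) :=
    (indepFun_iff_map_prod_eq_prod_map_map hYm.aemeasurable hVm.aemeasurable).mp hYV
  set F2 : ℝ × (ℝ × ℝ) → ℂ := fun q => cek k (G q.2.1 q.1 q.2.2) with hF2_def
  have hF2m : Measurable F2 := by
    apply hcm.comp
    exact hGmeas.comp (measurable_snd.fst.prodMk (measurable_fst.prodMk measurable_snd.snd))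
  have stepA : (∫ ω, cek k (G (X ω) (Y ω) (O ω)) ∂μ) = ∫ y, hfun y ∂(μ.map Y) := by
    have h0 : (∫ ω, cek k (G (X ω) (Y ω) (O ω)) ∂μ)
        = ∫ ω, F2 (Y ω, (X ω, O ω)) ∂μ := rfl
    rw [h0, ← integral_map (by fun_prop : AEMeasurable (fun ω => (Y ω, (X ω, O ω))) μ)
      hF2m.aestronglyMeasurable, hmap2,
      integral_prod _ (integrable_of_norm_le_one hF2m.aestronglyMeasurable
        (fun q => (hcn _).le))]
    refine integral_congr_ae (Filter.Eventually.of_forall fun y => ?_)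
    rw [hfun_def]
    exact integral_map hVm.aemeasurable
      ((hF2m.comp (measurable_const.prodMk measurable_id)).aestronglyMeasurable)
  have stepB : (∫ ω, cek k (G (X ω) (Y ω) (O ω)) ∂μ)
      = (∫ y in Set.Iio (0:ℝ), ρY y • hfun y)
        + Complex.ofReal (∫ y in Set.Ici (0:ℝ), ρY y) := by
    rw [stepA, hYlaw]
    have hco : (fun y => ENNReal.ofReal (ρY y))
        = fun y => ((Real.toNNReal (ρY y) : ℝ≥0) : ℝ≥0∞) := by
      funext y; rfl
    rw [hco, integral_withDensity_eq_integral_smul hρm.real_toNNReal hfun]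
    have hptw : ∀ y, (Real.toNNReal (ρY y)) • hfun y = ρY y • hfun y := fun y => by
      rw [NNReal.smul_def, Real.coe_toNNReal _ (hρ0 y)]
    rw [integral_congr_ae (Filter.Eventually.of_forall hptw),
      ← integral_add_compl (measurableSet_Iio (a := (0:ℝ))) hint2, Set.compl_Iio]
    congr 1
    rw [setIntegral_congr_fun measurableSet_Ici
      (fun y hy => by rw [hfun_one y hy, Complex.real_smul, mul_one])]
    exact integral_ofReal
  -- density integral over the half lines
  have hρint1 : ∫ y, ρY y = 1 := by
    rw [integral_eq_lintegral_of_nonneg_ae (Filter.Eventually.of_forall hρ0)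
      hρm.aestronglyMeasurable, hlin]
    simp
  have hsumR : (∫ y in Set.Iio (0:ℝ), ρY y) + (∫ y in Set.Ici (0:ℝ), ρY y) = 1 := by
    have h2 := integral_add_compl (measurableSet_Iio (a := (0:ℝ))) hρint
    rw [Set.compl_Iio] at h2
    rw [h2, hρint1]
  have hIio1 : Integrable (fun y => ρY y • hfun y) (volume.restrict (Set.Iio (0:ℝ))) :=
    hint2.restrict
  have hIio2 : Integrable (fun y => ((ρY y : ℝ) : ℂ)) (volume.restrict (Set.Iio (0:ℝ))) :=
    (hρint.restrict).ofReal
  have hsplit : (∫ y in Set.Iio (0:ℝ), (ρY y : ℂ) * (hfun y - 1))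
      = (∫ y in Set.Iio (0:ℝ), ρY y • hfun y)
        - Complex.ofReal (∫ y in Set.Iio (0:ℝ), ρY y) := by
    have hptw : ∀ y, (ρY y : ℂ) * (hfun y - 1) = ρY y • hfun y - ((ρY y : ℝ) : ℂ) :=
      fun y => by rw [Complex.real_smul]; ring
    rw [integral_congr_ae (Filter.Eventually.of_forall hptw), integral_sub hIio1 hIio2]
    congr 1
    exact integral_ofReal (𝕜 := ℂ)
  have hsumC : Complex.ofReal (∫ y in Set.Iio (0:ℝ), ρY y)
      + Complex.ofReal (∫ y in Set.Ici (0:ℝ), ρY y) = 1 := by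
    rw [← Complex.ofReal_add, hsumR, Complex.ofReal_one]
  show (∫ ω, cek k (G (X ω) (Y ω) (B ω * O ω)) ∂μ)
      = 1 + (p : ℂ) * ∫ y in Set.Iio (0:ℝ), (ρY y : ℂ) * (hfun y - 1)
  rw [step2, stepB, hsplit]
  push_cast
  linear_combination (p : ℂ) * hsumC
end

section
/- Fix λ ∈ (0,1] and a > 0. Let Ω be a random variable with probability density ρ_Ω supported on (0,∞), and let X be an independent nonnegative random variable whose law is p₀·δ₀ + ρ_X(x)dx, where p₀ ∈ [0,1], δ₀ is the point mass at 0, and ρ_X is a density on (0,∞) with p₀ + ∫₀^∞ ρ_X(x)dx = 1. Let G_λ(x,y,z) := z · min(1, max(−y/(λ(x+z)), 0)) for z > 0, and G_λ(x,y,0) := 0; note G_λ(x, −aλ, z) = z·min(1, a/(x+z)). Then for every k ∈ ℝ: E[ e^{i k G_λ(X, −aλ, Ω)} − 1 ] = p₀ · P(Ω > a) · (e^{i k a} − 1) + ∫₀^a P(X ∈ [0, a−u)) ρ_Ω(u) (e^{i k u} − 1) du + ∫₀^a ( ∫_{a−u}^∞ ρ_Ω( u x/(a−u) ) · ( a x/(a−u)²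 ) · ρ_X(x) dx ) (e^{i k u} − 1) du, where P(X ∈ [0, a−u)) = p₀ + ∫₀^{a−u} ρ_X(x) dx. -/
open MeasureTheory ProbabilityTheory Set
open scoped ENNReal NNReal

noncomputable def Glam (lam : ℝ) (x y z : ℝ) : ℝ :=
  z * min 1 (max (-(y / (lam * (x + z)))) 0)

section Aux

lemma cov_image (a x : ℝ) (ha : 0 < a) (hx : 0 < x) :
    (fun u => u * x / (a - u)) '' Ioo (max 0 (a - x)) a = Ioi (max 0 (a - x)) := by
  set m := max 0 (a - x) with hm
  have hm0 : 0 ≤ m := le_max_left _ _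
  have hmax : a - x ≤ m := le_max_right _ _
  ext z
  constructor
  · rintro ⟨u, ⟨hmu, hua⟩, rfl⟩
    have hu0 : 0 < u := lt_of_le_of_lt hm0 hmu
    have hau : 0 < a - u := by linarith
    rw [mem_Ioi, hm, max_lt_iff]
    constructor
    · positivity
    · rw [lt_div_iff₀ hau]; nlinarith
  · intro hz
    have hz0 : 0 < z := lt_of_le_of_lt hm0 hz
    have hxz : 0 < x + z := by linarith
    have hzax : a - x < z := lt_of_le_of_lt hmax hz
    refine ⟨a * z / (x + z), ⟨?_, ?_⟩, ?_⟩
    · rw [hm, max_lt_iff]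
      constructor
      · positivity
      · rw [lt_div_iff₀ hxz]; nlinarith
    · rw [div_lt_iff₀ hxz]; nlinarith
    · show a * z / (x + z) * x / (a - a * z / (x + z)) = z
      have hden : a - a * z / (x + z) = a * x / (x + z) := by
        field_simp; ring
      rw [hden]
      field_simp

lemma cov_deriv (a x : ℝ) (u : ℝ) (hua : u ≠ a) :
    HasDerivAt (fun u => u * x / (a - u)) (a * x / (a - u) ^ 2) u := by
  have h := ((hasDerivAt_id u).mul_const x).div ((hasDerivAt_const u a).sub (hasDerivAt_id u))
      (sub_ne_zero.2 (Ne.symm hua))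
  simp only [id] at h
  refine h.congr_deriv ?_
  show (1 * x * (a - u) - u * x * (0 - 1)) / (a - u) ^ 2 = _
  congr 1
  ring

lemma cov_inj (a x : ℝ) (ha : 0 < a) (hx : 0 < x) :
    InjOn (fun u => u * x / (a - u)) (Ioo (max 0 (a - x)) a) := by
  intro u hu v hv h
  have hau : a - u ≠ 0 := sub_ne_zero.2 (Ne.symm (ne_of_lt hu.2))
  have hav : a - v ≠ 0 := sub_ne_zero.2 (Ne.symm (ne_of_lt hv.2))
  simp only at h
  rw [div_eq_div_iff hau hav] at h
  have h2 : x * a * u = x * a * v := by linear_combination h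
  exact mul_left_cancel₀ (mul_ne_zero (ne_of_gt hx) (ne_of_gt ha)) h2

lemma cov_arg (a x u : ℝ) (ha : 0 < a) (hx : 0 < x)
    (hu : u ∈ Ioo (max 0 (a - x)) a) :
    a * (u * x / (a - u)) / (x + u * x / (a - u)) = u := by
  have hau : 0 < a - u := by linarith [hu.2]
  have h : x + u * x / (a - u) = a * x / (a - u) := by
    field_simp; ring
  rw [h]
  rw [div_eq_iff (by positivity : a * x / (a - u) ≠ 0)]
  field_simp

lemma cov_integral {E : Type*} [NormedAddCommGroup E] [NormedSpace ℝ E]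
    (a x : ℝ) (ha : 0 < a) (hx : 0 < x) (g : ℝ → E) :
    ∫ z in Ioi (max 0 (a - x)), g z
      = ∫ u in Ioo (max 0 (a - x)) a, (a * x / (a - u) ^ 2) • g (u * x / (a - u)) := by
  have := integral_image_eq_integral_abs_deriv_smul (f := fun u => u * x / (a - u))
    (f' := fun u => a * x / (a - u) ^ 2) measurableSet_Ioo
    (fun u hu => (cov_deriv a x u (ne_of_lt hu.2)).hasDerivWithinAt)
    (cov_inj a x ha hx) g
  rw [cov_image a x ha hx] at this
  rw [this]
  refine setIntegral_congr_fun measurableSet_Ioo (fun u hu => ?_)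
  have hau : 0 < a - u := by linarith [hu.2]
  rw [abs_of_pos (by positivity)]

lemma cov_integrableOn {E : Type*} [NormedAddCommGroup E] [NormedSpace ℝ E]
    (a x : ℝ) (ha : 0 < a) (hx : 0 < x) (g : ℝ → E)
    (hg : IntegrableOn g (Ioi (max 0 (a - x)))) :
    IntegrableOn (fun u => (a * x / (a - u) ^ 2) • g (u * x / (a - u)))
      (Ioo (max 0 (a - x)) a) := by
  have := (integrableOn_image_iff_integrableOn_abs_deriv_smul
    (f := fun u => u * x / (a - u)) (f' := fun u => a * x / (a - u) ^ 2) measurableSet_Ioo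
    (fun u hu => (cov_deriv a x u (ne_of_lt hu.2)).hasDerivWithinAt)
    (cov_inj a x ha hx) g)
  rw [cov_image a x ha hx] at this
  refine (this.1 hg).congr_fun (fun u hu => ?_) measurableSet_Ioo
  have hau : 0 < a - u := by linarith [hu.2]
  dsimp only
  rw [abs_of_pos (by positivity)]

lemma Glam_eq (lam : ℝ) (hlam : 0 < lam) (a x z : ℝ) :
    Glam lam x (-(a * lam)) z = z * min 1 (max (a / (x + z)) 0) := by
  unfold Glam
  rw [neg_div, neg_neg, mul_comm a lam, mul_div_mul_left _ _ (ne_of_gt hlam)]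

lemma Glam_low (lam : ℝ) (hlam : 0 < lam) (a x z : ℝ) (hx : 0 ≤ x)
    (hz : 0 < z) (hza : z ≤ a - x) : Glam lam x (-(a * lam)) z = z := by
  rw [Glam_eq lam hlam]
  have hxz : 0 < x + z := by linarith
  have h1 : 1 ≤ a / (x + z) := (one_le_div hxz).2 (by linarith)
  rw [max_eq_left (by linarith), min_eq_left h1, mul_one]

lemma Glam_high (lam : ℝ) (hlam : 0 < lam) (a x z : ℝ) (ha : 0 < a) (hx : 0 ≤ x)
    (hz : max 0 (a - x) < z) : Glam lam x (-(a * lam)) z = a * z / (x + z) := by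
  rw [Glam_eq lam hlam]
  have hz0 : 0 < z := lt_of_le_of_lt (le_max_left _ _) hz
  have hax : a - x < z := lt_of_le_of_lt (le_max_right _ _) hz
  have hxz : 0 < x + z := by linarith
  have h1 : a / (x + z) ≤ 1 := (div_le_one hxz).2 (by linarith)
  rw [max_eq_left (by positivity), min_eq_right h1]
  ring

end Aux

/-- For `λ ∈ (0,1]`, `a > 0`, `Ω` with density `ρ_Ω` on `(0,∞)` and an
independent `X ≥ 0` with law `p₀·δ₀ + ρ_X(x)dx`, the kernel
`E[e^{ikG_λ(X,−aλ,Ω)} − 1]` equals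
`p₀ P(Ω>a)(e^{ika}−1) + ∫₀^a P(X∈[0,a−u)) ρ_Ω(u)(e^{iku}−1) du
 + ∫₀^a (∫_{a−u}^∞ ρ_Ω(ux/(a−u)) (ax/(a−u)²) ρ_X(x) dx)(e^{iku}−1) du`,
with `P(X∈[0,a−u)) = p₀ + ∫₀^{a−u} ρ_X(x) dx`. -/
theorem stmt9
    (lam : ℝ) (hlam : lam ∈ Set.Ioc (0:ℝ) 1) (a : ℝ) (ha : 0 < a)
    (Ωs : Type) [MeasurableSpace Ωs] (μ : Measure Ωs) [IsProbabilityMeasure μ]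
    (X Om : Ωs → ℝ) (hXm : Measurable X) (hOm : Measurable Om)
    -- `X` and `Ω` are independent:
    (hindep : IndepFun X Om μ)
    (ρOm : ℝ → ℝ) (hρOm : Measurable ρOm) (hρOm0 : ∀ x, 0 ≤ ρOm x)
    (hρOmsupp : ∀ x ≤ (0:ℝ), ρOm x = 0)
    -- `Ω` has density `ρ_Ω` supported on `(0,∞)`:
    (hOlaw : Measure.map Om μ = volume.withDensity fun x => ENNReal.ofReal (ρOm x))
    (p₀ : ℝ) (hp₀ : p₀ ∈ Set.Icc (0:ℝ) 1)
    (ρX : ℝ → ℝ) (hρX : Measurable ρX) (hρX0 : ∀ x, 0 ≤ ρX x)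
    (hρXsupp : ∀ x ≤ (0:ℝ), ρX x = 0)
    -- `X` has law `p₀·δ₀ + ρ_X(x)dx`:
    (hXlaw : Measure.map X μ
      = ENNReal.ofReal p₀ • Measure.dirac (0:ℝ)
        + volume.withDensity fun x => ENNReal.ofReal (ρX x))
    (k : ℝ) :
    ∫ ω, (Complex.exp (Complex.I * (k : ℂ) * (Glam lam (X ω) (-(a * lam)) (Om ω) : ℝ)) - 1) ∂μ
      = (p₀ : ℂ) * ((μ {ω | a < Om ω}).toReal : ℝ)
          * (Complex.exp (Complex.I * (k : ℂ) * (a : ℂ)) - 1)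
        + (∫ u in Set.Ioo (0:ℝ) a,
            ((p₀ + ∫ x in Set.Ico (0:ℝ) (a - u), ρX x : ℝ) : ℂ) * (ρOm u : ℂ)
              * (Complex.exp (Complex.I * (k : ℂ) * (u : ℂ)) - 1))
        + ∫ u in Set.Ioo (0:ℝ) a,
            ((∫ x in Set.Ioi (a - u),
                ρOm (u * x / (a - u)) * (a * x / (a - u) ^ 2) * ρX x : ℝ) : ℂ)
              * (Complex.exp (Complex.I * (k : ℂ) * (u : ℂ)) - 1) := by
  obtain ⟨hlam0, -⟩ := hlam
  obtain ⟨hp0, -⟩ := hp₀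
  set f : ℝ → ℂ := fun t => Complex.exp (Complex.I * (k : ℂ) * ((t : ℝ) : ℂ)) - 1 with hfdef
  -- basic facts about f
  have hfm : Measurable f := by
    apply Measurable.sub _ measurable_const
    exact Complex.measurable_exp.comp (measurable_const.mul Complex.measurable_ofReal)
  have hf2 : ∀ t, ‖f t‖ ≤ 2 := by
    intro t
    have h1 : ‖Complex.exp (Complex.I * (k : ℂ) * ((t : ℝ) : ℂ))‖ = 1 := by
      rw [show Complex.I * (k : ℂ) * ((t : ℝ) : ℂ) = ((k * t : ℝ) : ℂ) * Complex.I by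
        push_cast; ring]
      rw [Complex.norm_exp_ofReal_mul_I]
    calc ‖f t‖ ≤ ‖Complex.exp (Complex.I * (k : ℂ) * ((t : ℝ) : ℂ))‖ + ‖(1 : ℂ)‖ :=
          norm_sub_le _ _
      _ ≤ 2 := by rw [h1, norm_one]; norm_num
  -- measurability of the kernel
  have hGm : Measurable (fun p : ℝ × ℝ => Glam lam p.1 (-(a * lam)) p.2) := by
    unfold Glam
    fun_prop
  have hFm : Measurable (fun p : ℝ × ℝ => f (Glam lam p.1 (-(a * lam)) p.2)) := hfm.comp hGm
  -- probability measures
  haveI hPX : IsProbabilityMeasure (Measure.map X μ) := Measure.isProbabilityMeasure_map hXm.aemeasurable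
  haveI hPO : IsProbabilityMeasure (Measure.map Om μ) := Measure.isProbabilityMeasure_map hOm.aemeasurable
  -- integrability of densities
  have hρOmlint : ∫⁻ z, ENNReal.ofReal (ρOm z) = 1 := by
    have h := measure_univ (μ := Measure.map Om μ)
    rw [hOlaw, withDensity_apply _ MeasurableSet.univ, setLIntegral_univ] at h
    exact h
  have hρXlint : ∫⁻ z, ENNReal.ofReal (ρX z) ≤ 1 := by
    have h := measure_univ (μ := Measure.map X μ)
    rw [hXlaw] at h
    have h2 : (volume.withDensity fun x => ENNReal.ofReal (ρX x)) univ
        ≤ (ENNReal.ofReal p₀ • Measure.dirac (0:ℝ)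
          + volume.withDensity fun x => ENNReal.ofReal (ρX x)) univ :=
      Measure.le_add_left le_rfl _
    rw [h, withDensity_apply _ MeasurableSet.univ, setLIntegral_univ] at h2
    exact h2
  have hρOmint : Integrable ρOm := by
    refine ⟨hρOm.aestronglyMeasurable, ?_⟩
    rw [hasFiniteIntegral_iff_ofReal (Filter.Eventually.of_forall hρOm0)]
    rw [hρOmlint]; exact ENNReal.one_lt_top
  have hρXint : Integrable ρX := by
    refine ⟨hρX.aestronglyMeasurable, ?_⟩
    rw [hasFiniteIntegral_iff_ofReal (Filter.Eventually.of_forall hρX0)]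
    exact lt_of_le_of_lt hρXlint ENNReal.one_lt_top
  -- bounded smul integrands are integrable
  have hbnd : ∀ h : ℝ → ℝ, Measurable h → Integrable (fun z => ρOm z • f (h z)) := by
    intro h hm
    refine Integrable.mono' (hρOmint.const_mul 2)
      ((hρOm.smul (hfm.comp hm)).aestronglyMeasurable)
      (Filter.Eventually.of_forall fun z => ?_)
    rw [norm_smul, Real.norm_eq_abs, abs_of_nonneg (hρOm0 z)]
    calc ρOm z * ‖f (h z)‖ ≤ ρOm z * 2 :=
          mul_le_mul_of_nonneg_left (hf2 _) (hρOm0 z)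
      _ = 2 * ρOm z := by ring
  -- conversion of withDensity integrals
  have hwd : ∀ ρ : ℝ → ℝ, Measurable ρ → (∀ y, 0 ≤ ρ y) → ∀ g : ℝ → ℂ,
      (∫ y, g y ∂(volume.withDensity fun y => ENNReal.ofReal (ρ y))) = ∫ y, ρ y • g y := by
    intro ρ hm h0 g
    rw [show (fun y => ENNReal.ofReal (ρ y))
        = (fun y => ((fun y => (ρ y).toNNReal) y : ℝ≥0∞)) from rfl]
    rw [integral_withDensity_eq_integral_smul hm.real_toNNReal g]
    congr 1; funext y
    rw [NNReal.smul_def, Real.coe_toNNReal _ (h0 y)]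
  -- Step 1: reduce to the joint law, a product measure
  have hjoint : Measure.map (fun ω => (X ω, Om ω)) μ
      = (Measure.map X μ).prod (Measure.map Om μ) :=
    (indepFun_iff_map_prod_eq_prod_map_map hXm.aemeasurable hOm.aemeasurable).mp hindep
  have hFint : Integrable (fun p : ℝ × ℝ => f (Glam lam p.1 (-(a * lam)) p.2))
      ((Measure.map X μ).prod (Measure.map Om μ)) := by
    refine Integrable.mono' (integrable_const 2) hFm.aestronglyMeasurable
      (Filter.Eventually.of_forall fun p => hf2 _)
  have step1 : (∫ ω, (Complex.exp (Complex.I * (k : ℂ)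
        * ((Glam lam (X ω) (-(a * lam)) (Om ω) : ℝ) : ℂ)) - 1) ∂μ)
      = ∫ p : ℝ × ℝ, f (Glam lam p.1 (-(a * lam)) p.2)
          ∂((Measure.map X μ).prod (Measure.map Om μ)) := by
    rw [← hjoint, integral_map (hXm.prodMk hOm).aemeasurable hFm.aestronglyMeasurable]
  -- Step 2: iterated integral
  set Ψ : ℝ → ℂ := fun x => ∫ z, f (Glam lam x (-(a * lam)) z) ∂(Measure.map Om μ) with hΨdef
  have step2 : (∫ p : ℝ × ℝ, f (Glam lam p.1 (-(a * lam)) p.2)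
        ∂((Measure.map X μ).prod (Measure.map Om μ)))
      = ∫ x, Ψ x ∂(Measure.map X μ) := integral_prod _ hFint
  -- Step 3: split the law of X
  have hΨint : Integrable Ψ (Measure.map X μ) := hFint.integral_prod_left
  have step3 : (∫ x, Ψ x ∂(Measure.map X μ))
      = p₀ • Ψ 0 + ∫ x, ρX x • Ψ x := by
    rw [hXlaw] at hΨint ⊢
    rw [integral_add_measure hΨint.left_of_add_measure hΨint.right_of_add_measure]
    rw [integral_smul_measure, integral_dirac, ENNReal.toReal_ofReal hp0]
    rw [hwd ρX hρX hρX0]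
  -- Ψ in terms of the density
  have hΨeq : ∀ x, Ψ x = ∫ z, ρOm z • f (Glam lam x (-(a * lam)) z) := by
    intro x
    rw [hΨdef]
    simp only
    rw [hOlaw, hwd ρOm hρOm hρOm0]
  -- value of P(Ω > a)
  have hPOm : (∫ z in Ioi a, ρOm z) = (μ {ω | a < Om ω}).toReal := by
    have h1 : μ {ω | a < Om ω} = Measure.map Om μ (Ioi a) := by
      rw [Measure.map_apply hOm measurableSet_Ioi]; rfl
    rw [h1, hOlaw, withDensity_apply _ measurableSet_Ioi]
    rw [integral_eq_lintegral_of_nonneg_ae (Filter.Eventually.of_forall hρOm0)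
      hρOm.aestronglyMeasurable.restrict]
  have hGxm : ∀ x : ℝ, Measurable (fun z => Glam lam x (-(a * lam)) z) :=
    fun x => hGm.comp (measurable_const.prodMk measurable_id)
  -- Step 4: the dirac part
  have step4 : Ψ 0 = (∫ z in Ioo 0 a, ρOm z • f z)
      + ((μ {ω | a < Om ω}).toReal : ℝ) • f a := by
    rw [hΨeq 0]
    rw [← setIntegral_eq_integral_of_forall_compl_eq_zero
      (s := Ioi (0:ℝ)) (f := fun z => ρOm z • f (Glam lam 0 (-(a * lam)) z))
      (fun z hz => by
        show ρOm z • f (Glam lam 0 (-(a * lam)) z) = 0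
        rw [hρOmsupp z (by simpa using hz), zero_smul])]
    rw [← Ioc_union_Ioi_eq_Ioi (le_of_lt ha)]
    rw [setIntegral_union (Ioc_disjoint_Ioi le_rfl) measurableSet_Ioi
      ((hbnd _ (hGxm 0)).integrableOn) ((hbnd _ (hGxm 0)).integrableOn)]
    congr 1
    · rw [setIntegral_congr_fun measurableSet_Ioc (fun z hz => by
        rw [Glam_low lam hlam0 a 0 z le_rfl hz.1 (by linarith [hz.2])])]
      exact integral_Ioc_eq_integral_Ioo
    · rw [setIntegral_congr_fun measurableSet_Ioi (g := fun z => ρOm z • f a) (fun z hz => by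
        rw [Glam_high lam hlam0 a 0 z ha le_rfl (by rw [sub_zero, max_eq_right ha.le]; exact hz)]
        rw [zero_add, mul_div_assoc, div_self (ne_of_gt (lt_trans ha hz)), mul_one])]
      rw [integral_smul_const, hPOm]
  -- Step 5: per-x decomposition, for x > 0
  set A : ℝ → ℂ := fun x => ∫ z in Ioo 0 (max 0 (a - x)), ρOm z • f z with hAdef
  set B : ℝ → ℂ := fun x => ∫ u in Ioo (max 0 (a - x)) a,
      (a * x / (a - u) ^ 2 * ρOm (u * x / (a - u))) • f u with hBdef
  have hsplit : ∀ x : ℝ, 0 < x → Ψ x = A x + B x := by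
    intro x hx
    rw [hΨeq x]
    rw [← setIntegral_eq_integral_of_forall_compl_eq_zero
      (s := Ioi (0:ℝ)) (f := fun z => ρOm z • f (Glam lam x (-(a * lam)) z))
      (fun z hz => by
        show ρOm z • f (Glam lam x (-(a * lam)) z) = 0
        rw [hρOmsupp z (by simpa using hz), zero_smul])]
    rw [← Ioc_union_Ioi_eq_Ioi (le_max_left 0 (a - x))]
    rw [setIntegral_union (Ioc_disjoint_Ioi le_rfl) measurableSet_Ioi
      ((hbnd _ (hGxm x)).integrableOn) ((hbnd _ (hGxm x)).integrableOn)]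
    congr 1
    · rw [setIntegral_congr_fun measurableSet_Ioc (fun z hz => by
        have hmz : max 0 (a - x) = a - x := by
          rcases max_cases 0 (a - x) with ⟨h1, h2⟩ | ⟨h1, h2⟩
          · linarith [hz.1, hz.2, h1.symm ▸ hz.2]
          · exact h1
        show ρOm z • f (Glam lam x (-(a * lam)) z) = ρOm z • f z
        rw [Glam_low lam hlam0 a x z hx.le hz.1 (hmz ▸ hz.2)])]
      exact integral_Ioc_eq_integral_Ioo
    · rw [setIntegral_congr_fun measurableSet_Ioi
        (g := fun z => ρOm z • f (a * z / (x + z))) (fun z hz => by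
          show ρOm z • f (Glam lam x (-(a * lam)) z) = ρOm z • f (a * z / (x + z))
          rw [Glam_high lam hlam0 a x z ha hx.le hz])]
      rw [cov_integral a x ha hx (fun z => ρOm z • f (a * z / (x + z)))]
      refine setIntegral_congr_fun measurableSet_Ioo (fun u hu => ?_)
      show (a * x / (a - u) ^ 2) • (ρOm (u * x / (a - u))
          • f (a * (u * x / (a - u)) / (x + u * x / (a - u)))) = _
      rw [cov_arg a x u ha hx hu, smul_smul]
  -- the two double-integral pieces
  set H1 : ℝ → ℝ → ℂ := fun x z =>
    ρX x • ((Ioo (0:ℝ) (max 0 (a - x))).indicator (fun z => ρOm z • f z) z) with hH1def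
  set H2 : ℝ → ℝ → ℂ := fun x u =>
    ρX x • ((Ioo (max 0 (a - x)) a).indicator
      (fun u => (a * x / (a - u) ^ 2 * ρOm (u * x / (a - u))) • f u) u) with hH2def
  have hH1A : ∀ x, (∫ z, H1 x z) = ρX x • A x := by
    intro x
    rw [hH1def]
    simp only
    rw [integral_smul, integral_indicator measurableSet_Ioo]
  have hH2B : ∀ x, (∫ u, H2 x u) = ρX x • B x := by
    intro x
    rw [hH2def]
    simp only
    rw [integral_smul, integral_indicator measurableSet_Ioo]
  -- measurability of H1, H2 as functions on the product
  have hH1m : Measurable (Function.uncurry H1) := by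
    have hset : MeasurableSet {p : ℝ × ℝ | 0 < p.2 ∧ p.2 < max 0 (a - p.1)} := by
      refine (measurableSet_lt measurable_const measurable_snd).inter
        (measurableSet_lt measurable_snd ?_)
      exact measurable_const.max (measurable_const.sub measurable_fst)
    have heq : Function.uncurry H1 = fun p : ℝ × ℝ => ρX p.1 •
        (({p : ℝ × ℝ | 0 < p.2 ∧ p.2 < max 0 (a - p.1)}).indicator
          (fun q : ℝ × ℝ => ρOm q.2 • f q.2) p) := by
      funext p
      rw [hH1def]
      simp only [Function.uncurry, Set.indicator_apply, mem_Ioo, mem_setOf_eq]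
    rw [heq]
    exact ((hρX.comp measurable_fst).smul
      (Measurable.indicator ((hρOm.comp measurable_snd).smul (hfm.comp measurable_snd)) hset))
  have hH2m : Measurable (Function.uncurry H2) := by
    have hset : MeasurableSet {p : ℝ × ℝ | max 0 (a - p.1) < p.2 ∧ p.2 < a} := by
      refine (measurableSet_lt ?_ measurable_snd).inter
        (measurableSet_lt measurable_snd measurable_const)
      exact measurable_const.max (measurable_const.sub measurable_fst)
    have heq : Function.uncurry H2 = fun p : ℝ × ℝ => ρX p.1 •
        (({p : ℝ × ℝ | max 0 (a - p.1) < p.2 ∧ p.2 < a}).indicator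
          (fun q : ℝ × ℝ => (a * q.1 / (a - q.2) ^ 2 * ρOm (q.2 * q.1 / (a - q.2))) • f q.2)
          p) := by
      funext p
      rw [hH2def]
      simp only [Function.uncurry, Set.indicator_apply, mem_Ioo, mem_setOf_eq]
    rw [heq]
    refine (hρX.comp measurable_fst).smul (Measurable.indicator ?_ hset)
    refine Measurable.smul (M := ℝ) ?_ (hfm.comp measurable_snd)
    refine Measurable.mul ?_ (hρOm.comp ?_)
    · exact (measurable_const.mul measurable_fst).div
        ((measurable_const.sub measurable_snd).pow measurable_const)
    · exact (measurable_snd.mul measurable_fst).div (measurable_const.sub measurable_snd)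
  -- integrability of H1 on the product
  have hH1int : Integrable (Function.uncurry H1) (volume.prod volume) := by
    refine Integrable.mono' (g := fun p : ℝ × ℝ => ρX p.1 * (2 * ρOm p.2))
      (hρXint.mul_prod (hρOmint.const_mul 2)) hH1m.aestronglyMeasurable
      (Filter.Eventually.of_forall fun p => ?_)
    rw [Function.uncurry, hH1def]
    simp only
    rw [norm_smul, Real.norm_eq_abs, abs_of_nonneg (hρX0 p.1)]
    refine mul_le_mul_of_nonneg_left ?_ (hρX0 p.1)
    by_cases hp : p.2 ∈ Ioo (0:ℝ) (max 0 (a - p.1))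
    · rw [Set.indicator_of_mem hp]
      rw [norm_smul, Real.norm_eq_abs, abs_of_nonneg (hρOm0 p.2)]
      calc ρOm p.2 * ‖f p.2‖ ≤ ρOm p.2 * 2 := mul_le_mul_of_nonneg_left (hf2 _) (hρOm0 p.2)
        _ = 2 * ρOm p.2 := by ring
    · rw [Set.indicator_of_notMem hp, norm_zero]
      have := hρOm0 p.2; linarith
  -- Jacobian integrability facts
  have hJint : ∀ x : ℝ, 0 < x → IntegrableOn
      (fun u => a * x / (a - u) ^ 2 * ρOm (u * x / (a - u))) (Ioo (max 0 (a - x)) a) := by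
    intro x hx
    simpa only [smul_eq_mul] using cov_integrableOn a x ha hx ρOm hρOmint.integrableOn
  have hJval : ∀ x : ℝ, 0 < x →
      (∫ u in Ioo (max 0 (a - x)) a, a * x / (a - u) ^ 2 * ρOm (u * x / (a - u)))
        = ∫ z in Ioi (max 0 (a - x)), ρOm z := by
    intro x hx
    simpa only [smul_eq_mul] using (cov_integral a x ha hx ρOm).symm
  have hJnonneg : ∀ x : ℝ, 0 < x → ∀ u ∈ Ioo (max 0 (a - x)) a,
      0 ≤ a * x / (a - u) ^ 2 * ρOm (u * x / (a - u)) := by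
    intro x hx u hu
    have : (0:ℝ) ≤ a * x / (a - u) ^ 2 := by positivity
    exact mul_nonneg this (hρOm0 _)
  -- integrability of the B-integrand
  have hBint : ∀ x : ℝ, 0 < x → IntegrableOn
      (fun u => (a * x / (a - u) ^ 2 * ρOm (u * x / (a - u))) • f u)
      (Ioo (max 0 (a - x)) a) := by
    intro x hx
    have hmeas : Measurable (fun z : ℝ => a * z / (x + z)) :=
      (measurable_const.mul measurable_id).div (measurable_const.add measurable_id)
    have h0 := cov_integrableOn a x ha hx (fun z => ρOm z • f (a * z / (x + z)))
      ((hbnd _ hmeas).integrableOn)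
    refine h0.congr_fun (fun u hu => ?_) measurableSet_Ioo
    show (a * x / (a - u) ^ 2) • (ρOm (u * x / (a - u))
        • f (a * (u * x / (a - u)) / (x + u * x / (a - u)))) = _
    rw [cov_arg a x u ha hx hu, smul_smul]
  -- H2 is integrable in u, for every x
  have hH2intx : ∀ x : ℝ, Integrable (H2 x) := by
    intro x
    rcases le_or_gt x 0 with hx0 | hx0
    · have : H2 x = fun _ => (0:ℂ) := by
        funext u; rw [hH2def]; simp only; rw [hρXsupp x hx0, zero_smul]
      rw [this]; exact integrable_zero _ _ _
    · rw [hH2def]; simp only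
      exact (((hBint x hx0).integrable_indicator measurableSet_Ioo).smul (ρX x))
  -- the norm integral of H2 is integrable in x
  have hH2norm : Integrable (fun x => ∫ u, ‖H2 x u‖) := by
    refine Integrable.mono' (g := fun x => ρX x * (2 * ∫ z, ρOm z))
      (hρXint.mul_const _) (hH2m.aestronglyMeasurable.norm.integral_prod_right')
      (Filter.Eventually.of_forall fun x => ?_)
    rw [Real.norm_eq_abs, abs_of_nonneg (integral_nonneg fun u => norm_nonneg _)]
    rcases le_or_gt x 0 with hx0 | hx0
    · have : H2 x = fun _ => (0:ℂ) := by
        funext u; rw [hH2def]; simp only; rw [hρXsupp x hx0, zero_smul]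
      rw [this]
      simp only [norm_zero, integral_zero]
      have h1 : (0:ℝ) ≤ ∫ z, ρOm z := integral_nonneg hρOm0
      have h2 := hρX0 x
      positivity
    · have hnorm : ∀ u, ‖H2 x u‖ = ρX x * ((Ioo (max 0 (a - x)) a).indicator
          (fun u => ‖(a * x / (a - u) ^ 2 * ρOm (u * x / (a - u))) • f u‖) u) := by
        intro u
        rw [hH2def]; simp only
        rw [norm_smul, Real.norm_eq_abs, abs_of_nonneg (hρX0 x),
          norm_indicator_eq_indicator_norm]
      simp_rw [hnorm]
      rw [MeasureTheory.integral_const_mul]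
      refine mul_le_mul_of_nonneg_left ?_ (hρX0 x)
      rw [integral_indicator measurableSet_Ioo]
      have hle : (∫ u in Ioo (max 0 (a - x)) a,
            ‖(a * x / (a - u) ^ 2 * ρOm (u * x / (a - u))) • f u‖)
          ≤ ∫ u in Ioo (max 0 (a - x)) a,
            (a * x / (a - u) ^ 2 * ρOm (u * x / (a - u))) * 2 := by
        refine setIntegral_mono_on ((hBint x hx0).norm) ((hJint x hx0).mul_const 2)
          measurableSet_Ioo (fun u hu => ?_)
        rw [norm_smul, Real.norm_eq_abs, abs_of_nonneg (hJnonneg x hx0 u hu)]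
        exact mul_le_mul_of_nonneg_left (hf2 _) (hJnonneg x hx0 u hu)
      refine le_trans hle ?_
      rw [integral_mul_const, hJval x hx0]
      have h2 : (∫ z in Ioi (max 0 (a - x)), ρOm z) ≤ ∫ z, ρOm z :=
        setIntegral_le_integral hρOmint (Filter.Eventually.of_forall hρOm0)
      linarith
  -- H2 is integrable on the product
  have hH2int : Integrable (Function.uncurry H2) (volume.prod volume) :=
    (integrable_prod_iff hH2m.aestronglyMeasurable).2
      ⟨Filter.Eventually.of_forall hH2intx, hH2norm⟩
  -- swap the order of integration
  have hswap1 : (∫ x, ∫ z, H1 x z) = ∫ z, ∫ x, H1 x z := integral_integral_swap hH1int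
  have hswap2 : (∫ x, ∫ u, H2 x u) = ∫ u, ∫ x, H2 x u := integral_integral_swap hH2int
  -- evaluate the inner integrals after swapping
  have hinner1 : ∀ z, (∫ x, H1 x z)
      = (Ioo (0:ℝ) a).indicator
          (fun z => (∫ x in Iio (a - z), ρX x) • (ρOm z • f z)) z := by
    intro z
    by_cases hz : z ∈ Ioo (0:ℝ) a
    · rw [Set.indicator_of_mem hz]
      have hpt : ∀ x, H1 x z = ((Iio (a - z)).indicator ρX x) • (ρOm z • f z) := by
        intro x
        rw [hH1def]; simp only
        by_cases hxz : x < a - z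
        · rw [Set.indicator_of_mem (show x ∈ Iio (a - z) from hxz),
            Set.indicator_of_mem (mem_Ioo.mpr
              ⟨hz.1, lt_of_lt_of_le (by linarith) (le_max_right 0 (a - x))⟩)]
        · rw [Set.indicator_of_notMem (show x ∉ Iio (a - z) from hxz), zero_smul,
            Set.indicator_of_notMem, smul_zero]
          intro hmem
          rcases lt_max_iff.1 hmem.2 with h | h
          · linarith [hz.1]
          · exact hxz (by linarith)
      simp_rw [hpt]
      rw [integral_smul_const, integral_indicator measurableSet_Iio]
    · rw [Set.indicator_of_notMem hz]
      have hpt : ∀ x, H1 x z = 0 := by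
        intro x
        rcases le_or_gt x 0 with hx0 | hx0
        · rw [hH1def]; simp only; rw [hρXsupp x hx0, zero_smul]
        · rw [hH1def]; simp only
          rw [Set.indicator_of_notMem, smul_zero]
          intro hmem
          exact hz ⟨hmem.1, lt_of_lt_of_le hmem.2 (max_le ha.le (by linarith))⟩
      simp_rw [hpt]
      exact integral_zero _ _
  have hinner2 : ∀ u, (∫ x, H2 x u)
      = (Ioo (0:ℝ) a).indicator
          (fun u => (∫ x in Ioi (a - u),
              ρX x * (a * x / (a - u) ^ 2 * ρOm (u * x / (a - u)))) • f u) u := by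
    intro u
    by_cases hu : u ∈ Ioo (0:ℝ) a
    · rw [Set.indicator_of_mem hu]
      have hpt : ∀ x, H2 x u = ((Ioi (a - u)).indicator
          (fun x => ρX x * (a * x / (a - u) ^ 2 * ρOm (u * x / (a - u)))) x) • f u := by
        intro x
        rw [hH2def]; simp only
        by_cases hxu : a - u < x
        · rw [Set.indicator_of_mem (show x ∈ Ioi (a - u) from hxu),
            Set.indicator_of_mem (mem_Ioo.mpr ⟨max_lt_iff.2 ⟨hu.1, by linarith⟩, hu.2⟩),
            smul_smul]
        · rw [Set.indicator_of_notMem (show x ∉ Ioi (a - u) from hxu), zero_smul,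
            Set.indicator_of_notMem, smul_zero]
          intro hmem
          exact hxu (by linarith [lt_of_le_of_lt (le_max_right 0 (a - x)) hmem.1])
      simp_rw [hpt]
      rw [integral_smul_const, integral_indicator measurableSet_Ioi]
    · rw [Set.indicator_of_notMem hu]
      have hpt : ∀ x, H2 x u = 0 := by
        intro x
        rw [hH2def]; simp only
        rw [Set.indicator_of_notMem, smul_zero]
        intro hmem
        exact hu ⟨lt_of_le_of_lt (le_max_left 0 (a - x)) hmem.1, hmem.2⟩
      simp_rw [hpt]
      exact integral_zero _ _
  -- the density part of the X-integral
  have hD : (∫ x, ρX x • Ψ x)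
      = (∫ z in Ioo (0:ℝ) a, (∫ x in Iio (a - z), ρX x) • (ρOm z • f z))
        + (∫ u in Ioo (0:ℝ) a, (∫ x in Ioi (a - u),
            ρX x * (a * x / (a - u) ^ 2 * ρOm (u * x / (a - u)))) • f u) := by
    have hptx : ∀ x, ρX x • Ψ x = (∫ z, H1 x z) + (∫ u, H2 x u) := by
      intro x
      rw [hH1A, hH2B]
      rcases le_or_gt x 0 with hx0 | hx0
      · rw [hρXsupp x hx0]; simp
      · rw [hsplit x hx0, smul_add]
    calc (∫ x, ρX x • Ψ x) = ∫ x, ((∫ z, H1 x z) + (∫ u, H2 x u)) := by simp_rw [hptx]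
      _ = (∫ x, ∫ z, H1 x z) + (∫ x, ∫ u, H2 x u) :=
          integral_add hH1int.integral_prod_left hH2int.integral_prod_left
      _ = (∫ z, ∫ x, H1 x z) + (∫ u, ∫ x, H2 x u) := by rw [hswap1, hswap2]
      _ = _ := by
          simp_rw [hinner1, hinner2]
          rw [integral_indicator measurableSet_Ioo, integral_indicator measurableSet_Ioo]
  -- replacing Iio (a-z) by Ico 0 (a-z)
  have hIio : ∀ z ∈ Ioo (0:ℝ) a,
      (∫ x in Iio (a - z), ρX x) = ∫ x in Ico 0 (a - z), ρX x := by
    intro z hz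
    rw [← Iio_union_Ico_eq_Iio (le_of_lt (by linarith [hz.2] : (0:ℝ) < a - z))]
    rw [setIntegral_union (by
        rw [Set.disjoint_left]; intro x hx hx2; exact absurd hx2.1 (not_le.2 hx))
      measurableSet_Ico hρXint.integrableOn hρXint.integrableOn]
    have h0 : (∫ x in Iio (0:ℝ), ρX x) = 0 := by
      rw [setIntegral_congr_fun measurableSet_Iio (fun x hx => hρXsupp x (le_of_lt hx))]
      exact integral_zero _ _
    rw [h0, zero_add]
  -- merging the middle terms
  have hfint0 : Integrable (fun z => ρOm z • f z) := by
    simpa using hbnd (fun z => z) measurable_id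
  have hCX : (0:ℝ) ≤ ∫ x, ρX x := integral_nonneg hρX0
  have hc_anti : Antitone (fun z : ℝ => ∫ x in Ico 0 (a - z), ρX x) := by
    intro z1 z2 h12
    exact setIntegral_mono_set hρXint.integrableOn (Filter.Eventually.of_forall hρX0)
      (HasSubset.Subset.eventuallyLE (Ico_subset_Ico_right (by linarith)))
  have hcm : Measurable fun z : ℝ => ∫ x in Ico 0 (a - z), ρX x := hc_anti.measurable
  have int2 : IntegrableOn
      (fun z => (∫ x in Ico 0 (a - z), ρX x) • (ρOm z • f z)) (Ioo (0:ℝ) a) := by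
    refine Integrable.mono' (g := fun z => (∫ x, ρX x) * (2 * ρOm z))
      (((hρOmint.const_mul 2).const_mul _).integrableOn)
      ((hcm.smul (hρOm.smul hfm)).aestronglyMeasurable.restrict)
      (Filter.Eventually.of_forall fun z => ?_)
    rw [norm_smul, norm_smul, Real.norm_eq_abs, Real.norm_eq_abs,
      abs_of_nonneg (setIntegral_nonneg measurableSet_Ico fun x _ => hρX0 x),
      abs_of_nonneg (hρOm0 z)]
    have h1 : (∫ x in Ico 0 (a - z), ρX x) ≤ ∫ x, ρX x :=
      setIntegral_le_integral hρXint (Filter.Eventually.of_forall hρX0)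
    have h2 : ρOm z * ‖f z‖ ≤ 2 * ρOm z := by
      have := mul_le_mul_of_nonneg_left (hf2 z) (hρOm0 z); linarith
    exact mul_le_mul h1 h2 (mul_nonneg (hρOm0 z) (norm_nonneg _)) hCX
  have hmid : p₀ • (∫ z in Ioo (0:ℝ) a, ρOm z • f z)
        + (∫ z in Ioo (0:ℝ) a, (∫ x in Iio (a - z), ρX x) • (ρOm z • f z))
      = ∫ u in Ioo (0:ℝ) a,
          ((p₀ + ∫ x in Ico 0 (a - u), ρX x : ℝ) : ℂ) * ((ρOm u : ℝ) : ℂ) * f u := by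
    calc p₀ • (∫ z in Ioo (0:ℝ) a, ρOm z • f z)
          + (∫ z in Ioo (0:ℝ) a, (∫ x in Iio (a - z), ρX x) • (ρOm z • f z))
        = (∫ z in Ioo (0:ℝ) a, p₀ • (ρOm z • f z))
          + ∫ z in Ioo (0:ℝ) a, (∫ x in Ico 0 (a - z), ρX x) • (ρOm z • f z) := by
          rw [← integral_smul]
          congr 1
          refine setIntegral_congr_fun measurableSet_Ioo fun z hz => ?_
          rw [hIio z hz]
      _ = ∫ z in Ioo (0:ℝ) a, (p₀ • (ρOm z • f z)
            + (∫ x in Ico 0 (a - z), ρX x) • (ρOm z • f z)) :=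
          (integral_add (hfint0.integrableOn.smul p₀) int2).symm
      _ = _ := by
          refine setIntegral_congr_fun measurableSet_Ioo fun z hz => ?_
          simp only [Complex.real_smul]
          push_cast
          ring
  -- the final form of the third term
  have hT2fin : (∫ u in Ioo (0:ℝ) a, (∫ x in Ioi (a - u),
          ρX x * (a * x / (a - u) ^ 2 * ρOm (u * x / (a - u)))) • f u)
      = ∫ u in Ioo (0:ℝ) a, ((∫ x in Ioi (a - u),
          ρOm (u * x / (a - u)) * (a * x / (a - u) ^ 2) * ρX x : ℝ) : ℂ) * f u := by
    refine setIntegral_congr_fun measurableSet_Ioo fun u hu => ?_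
    have h : (∫ x in Ioi (a - u), ρX x * (a * x / (a - u) ^ 2 * ρOm (u * x / (a - u))))
        = ∫ x in Ioi (a - u), ρOm (u * x / (a - u)) * (a * x / (a - u) ^ 2) * ρX x :=
      setIntegral_congr_fun measurableSet_Ioi fun x _ => by ring
    rw [h, Complex.real_smul]
  -- final assembly
  calc (∫ ω, (Complex.exp (Complex.I * (k : ℂ)
          * ((Glam lam (X ω) (-(a * lam)) (Om ω) : ℝ) : ℂ)) - 1) ∂μ)
      = p₀ • ((∫ z in Ioo (0:ℝ) a, ρOm z • f z)
            + ((μ {ω | a < Om ω}).toReal : ℝ) • f a)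
        + ((∫ z in Ioo (0:ℝ) a, (∫ x in Iio (a - z), ρX x) • (ρOm z • f z))
          + (∫ u in Ioo (0:ℝ) a, (∫ x in Ioi (a - u),
              ρX x * (a * x / (a - u) ^ 2 * ρOm (u * x / (a - u)))) • f u)) := by
        rw [step1, step2, step3, step4, hD]
    _ = ((p₀ : ℂ) * (((μ {ω | a < Om ω}).toReal : ℝ) : ℂ) * f a)
        + (p₀ • (∫ z in Ioo (0:ℝ) a, ρOm z • f z)
          + (∫ z in Ioo (0:ℝ) a, (∫ x in Iio (a - z), ρX x) • (ρOm z • f z)))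
        + (∫ u in Ioo (0:ℝ) a, (∫ x in Ioi (a - u),
            ρX x * (a * x / (a - u) ^ 2 * ρOm (u * x / (a - u)))) • f u) := by
        simp only [smul_add, Complex.real_smul]
        ring
    _ = _ := by
        rw [hmid, hT2fin]
end

section
/- Let (V, E) be a finite directed tree (E ⊆ V × V, no self-loops, at most one of (v,w),(w,v) in E, underlying undirected graph a tree). Fix λ ∈ (0,1]. On a probability space let {Δ⁰_u}_{u∈V} be real-valued random variables and {Ω̄_e}_{e∈E} be nonnegative random variables. Define the Eisenberg–Noe shock transmission function G_λ(x,y,z) := z·min(1, max(−y/(λ(x+z)), 0)) for z > 0 and G_λ(x,y,0) := 0. For (w,v) ∈ E set X_{w∖v} := Σ_{u : (w,u)∈E, u≠v} Ω̄_{(w,u)}, and define the solvency cascade recursively by: Δ^{(0)}_v := Δ⁰_v; S^{(n)}_{wv} := G_λ( X_{w∖v}, Δ^{(n)}_w, Ω̄_{(w,v)} ) for (w,v) ∈ E; S^{(n)}_v := Σ_{w : (w,v)∈E} S^{(n)}_{wv}; and Δ^{(n+1)}_v := Δ⁰_v − S^{(n)}_v. For A ⊆ V ∪ E let σ(A) denote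 the σ-algebra generated by the random variables {Δ⁰_u : u ∈ A ∩ V} ∪ {Ω̄_e : e ∈ A ∩ E}. Then for every n ≥ 0: (1) for every v ∈ V, Δ^{(n)}_v is σ(M⁻_v ∪ {v})-measurable; (2) for every (w,v) ∈ E, S^{(n)}_{wv} is σ( M⁻_w ∪ M⁺_{w∖v} ∪ {w} ∪ {(w,v)} )-measurable; (3) for every v ∈ V, S^{(n)}_v is σ(M⁻_v)-measurable. (This is the locally tree-like independence property of the solvency cascade mechanism.) -/
open MeasureTheory

/-- The undirected adjacency relation underlying a directed edge set `E`. -/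
def adjOf {V : Type} (E : Set (V × V)) (a b : V) : Prop := (a, b) ∈ E ∨ (b, a) ∈ E

/-- Reachability in the underlying undirected graph avoiding the node `u`. -/
def reachAvoid {V : Type} (E : Set (V × V)) (u : V) (w x : V) : Prop :=
  Relation.ReflTransGen (fun a b => adjOf E a b ∧ a ≠ u ∧ b ≠ u) w x

/-- The branch `B_u(w)` at `u` through a neighbour `w`, as a subset of `V ⊕ E`. -/
def branch {V : Type} (E : Set (V × V)) (u w : V) : Set (V ⊕ (V × V)) :=
  (Sum.inl '' {x | reachAvoid E u w x}) ∪
    (Sum.inr '' {e | e ∈ E ∧ reachAvoid E u w e.1 ∧ reachAvoid E u w e.2})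

/-- `M⁻_u`: nodes and edges connected to `u` by a path whose final edge is directed
into `u`. -/
def Mminus {V : Type} (E : Set (V × V)) (u : V) : Set (V ⊕ (V × V)) :=
  ⋃ w ∈ {w | (w, u) ∈ E}, insert (Sum.inr (w, u)) (branch E u w)

/-- `M⁺_{w∖v}`: nodes and edges connected to `w` by a path whose final edge is directed
out of `w` but is not the edge `(w,v)`. -/
def MplusEx {V : Type} (E : Set (V × V)) (w v : V) : Set (V ⊕ (V × V)) :=
  ⋃ u ∈ {u | (w, u) ∈ E ∧ u ≠ v}, insert (Sum.inr (w, u)) (branch E w u)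

/-- `X_{w∖v} = Σ_{u : (w,u) ∈ E, u ≠ v} Ω̄_{(w,u)}`. -/
def Xexc {V Ωs : Type} [Fintype V] [DecidableEq V] (E : Finset (V × V))
    (Om : V × V → Ωs → ℝ) (w v : V) (ω : Ωs) : ℝ :=
  ∑ u ∈ Finset.univ.filter (fun u => (w, u) ∈ E ∧ u ≠ v), Om (w, u) ω

/-- The solvency cascade: `Δ^{(0)}_v = Δ⁰_v` and
`Δ^{(n+1)}_v = Δ⁰_v − Σ_{w : (w,v)∈E} G_λ(X_{w∖v}, Δ^{(n)}_w, Ω̄_{(w,v)})`. -/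
noncomputable def cascadeDelta {V Ωs : Type} [Fintype V] [DecidableEq V] (lam : ℝ)
    (E : Finset (V × V)) (Δ0 : V → Ωs → ℝ) (Om : V × V → Ωs → ℝ) :
    ℕ → V → Ωs → ℝ
  | 0 => Δ0
  | n + 1 => fun v ω => Δ0 v ω -
      ∑ w ∈ Finset.univ.filter (fun w => (w, v) ∈ E),
        Glam lam (Xexc E Om w v ω) (cascadeDelta lam E Δ0 Om n w ω) (Om (w, v) ω)

/-- `σ(A)`: the σ-algebra on the sample space generated by the random variables
`{Δ⁰_u : u ∈ A ∩ V} ∪ {Ω̄_e : e ∈ A ∩ E}`. -/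
def sigmaOf {V Ωs : Type} (Δ0 : V → Ωs → ℝ) (Om : V × V → Ωs → ℝ)
    (A : Set (V ⊕ (V × V))) : MeasurableSpace Ωs :=
  (⨆ u ∈ {u : V | Sum.inl u ∈ A}, MeasurableSpace.comap (Δ0 u) inferInstance) ⊔
    (⨆ e ∈ {e : V × V | Sum.inr e ∈ A}, MeasurableSpace.comap (Om e) inferInstance)

section TreeCombinatorics

variable {V : Type} {Es : Set (V × V)}

lemma adjOf_ne (hloop : ∀ v, (v, v) ∉ Es) {a b : V} (h : adjOf Es a b) : a ≠ b := by
  rintro rfl; rcases h with h | h <;> exact hloop _ h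

lemma reachAvoid_ne {u w x : V} (hw : w ≠ u) (h : reachAvoid Es u w x) : x ≠ u := by
  induction h with
  | refl => exact hw
  | tail _ h _ => exact h.2.2

lemma reachAvoid_exists_walk (hloop : ∀ v, (v, v) ∉ Es) {u w x : V} (hw : w ≠ u)
    (h : reachAvoid Es u w x) :
    ∃ p : (SimpleGraph.fromRel (fun a b => (a, b) ∈ Es)).Walk w x,
      ∀ y ∈ p.support, y ≠ u := by
  induction h with
  | refl => exact ⟨SimpleGraph.Walk.nil, by simp [hw]⟩
  | tail _ hbc ih =>
    obtain ⟨p, hp⟩ := ih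
    have hadj : (SimpleGraph.fromRel (fun a b => (a, b) ∈ Es)).Adj _ _ :=
      (SimpleGraph.fromRel_adj _ _ _).mpr ⟨adjOf_ne hloop hbc.1, hbc.1⟩
    refine ⟨p.concat hadj, ?_⟩
    intro y hy
    rw [SimpleGraph.Walk.support_concat, List.mem_append] at hy
    rcases hy with hy | hy
    · exact hp y hy
    · simp only [List.mem_singleton] at hy; subst hy; exact hbc.2.2

lemma reachAvoid_ne_of_tree [DecidableEq V] (hloop : ∀ v, (v, v) ∉ Es)
    (hacyc : (SimpleGraph.fromRel (fun a b => (a, b) ∈ Es)).IsAcyclic)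
    {u v w : V} (hwv : adjOf Es w v) (hwu : adjOf Es w u) (huv : u ≠ v)
    {x : V} (hx : reachAvoid Es w u x) : x ≠ v := by
  intro hxv
  rw [hxv] at hx
  have huw : u ≠ w := (adjOf_ne hloop hwu).symm
  have hvw : v ≠ w := (adjOf_ne hloop hwv).symm
  obtain ⟨p, hp⟩ := reachAvoid_exists_walk hloop huw hx
  have hq1 : (SimpleGraph.fromRel fun a b => (a, b) ∈ Es).Adj u w :=
    (SimpleGraph.fromRel_adj _ _ _).mpr ⟨huw, hwu.symm⟩
  have hq2 : (SimpleGraph.fromRel fun a b => (a, b) ∈ Es).Adj w v :=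
    (SimpleGraph.fromRel_adj _ _ _).mpr ⟨Ne.symm hvw, hwv⟩
  have hq : (SimpleGraph.Walk.cons hq1 (SimpleGraph.Walk.cons hq2 SimpleGraph.Walk.nil)).IsPath := by
    simp [SimpleGraph.Walk.isPath_def, huw, huv, hvw, Ne.symm hvw]
  have heq := hacyc.path_unique ⟨_, hq⟩ p.toPath
  have hwmem : w ∈ (p.toPath :
      (SimpleGraph.fromRel fun a b => (a, b) ∈ Es).Walk u v).support := by
    rw [← heq]; simp
  exact hp w (SimpleGraph.Walk.support_toPath_subset p hwmem) rfl

lemma reachAvoid_extend [DecidableEq V] (hloop : ∀ v, (v, v) ∉ Es)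
    (hacyc : (SimpleGraph.fromRel (fun a b => (a, b) ∈ Es)).IsAcyclic)
    {u v w : V} (hwv : adjOf Es w v) (hwu : adjOf Es w u) (huv : u ≠ v)
    {x : V} (hx : reachAvoid Es w u x) : reachAvoid Es v w x := by
  have hwvne : w ≠ v := adjOf_ne hloop hwv
  induction hx with
  | refl => exact Relation.ReflTransGen.single ⟨hwu, hwvne, huv⟩
  | tail hab hbc ih =>
    exact ih.tail ⟨hbc.1, reachAvoid_ne_of_tree hloop hacyc hwv hwu huv hab,
      reachAvoid_ne_of_tree hloop hacyc hwv hwu huv (hab.tail hbc)⟩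

lemma branch_subset [DecidableEq V] (hloop : ∀ v, (v, v) ∉ Es)
    (hacyc : (SimpleGraph.fromRel (fun a b => (a, b) ∈ Es)).IsAcyclic)
    {u v w : V} (hwv : adjOf Es w v) (hwu : adjOf Es w u) (huv : u ≠ v) :
    branch Es w u ⊆ branch Es v w := by
  rintro z (⟨y, hy, rfl⟩ | ⟨e, ⟨he, h1, h2⟩, rfl⟩)
  · exact Or.inl ⟨y, reachAvoid_extend hloop hacyc hwv hwu huv hy, rfl⟩
  · exact Or.inr ⟨e, ⟨he, reachAvoid_extend hloop hacyc hwv hwu huv h1,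
      reachAvoid_extend hloop hacyc hwv hwu huv h2⟩, rfl⟩

lemma subset_Mminus [DecidableEq V] (hloop : ∀ v, (v, v) ∉ Es)
    (hanti : ∀ v w, (v, w) ∈ Es → (w, v) ∉ Es)
    (hacyc : (SimpleGraph.fromRel (fun a b => (a, b) ∈ Es)).IsAcyclic)
    {w v : V} (hwv : (w, v) ∈ Es) :
    Mminus Es w ∪ MplusEx Es w v ∪ {Sum.inl w} ∪ {Sum.inr (w, v)} ⊆ Mminus Es v := by
  have hwvne : w ≠ v := adjOf_ne hloop (Or.inl hwv)
  have hmain : insert (Sum.inr (w, v)) (branch Es v w) ⊆ Mminus Es v :=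
    Set.subset_biUnion_of_mem (u := fun w' => insert (Sum.inr (w', v)) (branch Es v w')) hwv
  intro z hz
  apply hmain
  rcases hz with ((hz | hz) | hz) | hz
  · -- z ∈ Mminus Es w
    simp only [Mminus, Set.mem_iUnion, Set.mem_setOf_eq] at hz
    obtain ⟨u, hu, hz⟩ := hz
    have huv : u ≠ v := by rintro rfl; exact hanti _ _ hu hwv
    rcases hz with hz | hz
    · subst hz
      exact Set.mem_insert_of_mem _ (Or.inr ⟨(u, w), ⟨hu,
        Relation.ReflTransGen.single ⟨Or.inr hu, hwvne, huv⟩, Relation.ReflTransGen.refl⟩, rfl⟩)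
    · exact Set.mem_insert_of_mem _
        (branch_subset hloop hacyc (Or.inl hwv) (Or.inr hu) huv hz)
  · -- z ∈ MplusEx Es w v
    simp only [MplusEx, Set.mem_iUnion, Set.mem_setOf_eq] at hz
    obtain ⟨u, ⟨hu, huv⟩, hz⟩ := hz
    rcases hz with hz | hz
    · subst hz
      exact Set.mem_insert_of_mem _ (Or.inr ⟨(w, u), ⟨hu, Relation.ReflTransGen.refl,
        Relation.ReflTransGen.single ⟨Or.inl hu, hwvne, huv⟩⟩, rfl⟩)
    · exact Set.mem_insert_of_mem _
        (branch_subset hloop hacyc (Or.inl hwv) (Or.inl hu) huv hz)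
  · rcases hz with rfl
    exact Set.mem_insert_of_mem _ (Or.inl ⟨w, Relation.ReflTransGen.refl, rfl⟩)
  · rcases hz with rfl
    exact Set.mem_insert _ _

end TreeCombinatorics

section MeasAux

variable {V Ωs : Type} [MeasurableSpace Ωs]

lemma sigmaOf_mono (Δ0 : V → Ωs → ℝ) (Om : V × V → Ωs → ℝ)
    {A B : Set (V ⊕ (V × V))} (h : A ⊆ B) :
    sigmaOf Δ0 Om A ≤ sigmaOf Δ0 Om B := by
  refine sup_le_sup ?_ ?_
  · exact iSup_le fun u => iSup_le fun hu =>
      le_iSup₂ (f := fun u (_ : Sum.inl u ∈ B) => MeasurableSpace.comap (Δ0 u) inferInstance) u (h hu)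
  · exact iSup_le fun e => iSup_le fun he =>
      le_iSup₂ (f := fun e (_ : Sum.inr e ∈ B) => MeasurableSpace.comap (Om e) inferInstance) e (h he)

lemma measurable_Δ0_of_mem (Δ0 : V → Ωs → ℝ) (Om : V × V → Ωs → ℝ)
    {A : Set (V ⊕ (V × V))} {u : V} (h : Sum.inl u ∈ A) :
    Measurable[sigmaOf Δ0 Om A] (Δ0 u) :=
  Measurable.of_comap_le (le_trans
    (le_iSup₂ (f := fun u (_ : Sum.inl u ∈ A) => MeasurableSpace.comap (Δ0 u) inferInstance) u h)
    le_sup_left)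

lemma measurable_Om_of_mem (Δ0 : V → Ωs → ℝ) (Om : V × V → Ωs → ℝ)
    {A : Set (V ⊕ (V × V))} {e : V × V} (h : Sum.inr e ∈ A) :
    Measurable[sigmaOf Δ0 Om A] (Om e) :=
  Measurable.of_comap_le (le_trans
    (le_iSup₂ (f := fun e (_ : Sum.inr e ∈ A) => MeasurableSpace.comap (Om e) inferInstance) e h)
    le_sup_right)

lemma measurable_Glam {m : MeasurableSpace Ωs} {lam : ℝ} {f g h : Ωs → ℝ}
    (hf : Measurable[m] f) (hg : Measurable[m] g) (hh : Measurable[m] h) :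
    Measurable[m] (fun ω => Glam lam (f ω) (g ω) (h ω)) := by
  unfold Glam
  exact hh.mul (measurable_const.min
    (((hg.div (measurable_const.mul (hf.add hh))).neg).max measurable_const))

end MeasAux

/-- locally tree-like independence of the Eisenberg–Noe solvency cascade.
On a finite directed tree, for every `n ≥ 0`:
(1) `Δ^{(n)}_v` is `σ(M⁻_v ∪ {v})`-measurable;
(2) `S^{(n)}_{wv}` is `σ(M⁻_w ∪ M⁺_{w∖v} ∪ {w} ∪ {(w,v)})`-measurable;
(3) `S^{(n)}_v` is `σ(M⁻_v)`-measurable. -/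
theorem stmt11
    (V : Type) [Fintype V] [DecidableEq V]
    (Ωs : Type) [MeasurableSpace Ωs] (μ : Measure Ωs)
    [IsProbabilityMeasure μ]
    (E : Finset (V × V))
    (hloop : ∀ v, (v, v) ∉ E)
    (hanti : ∀ v w, (v, w) ∈ E → (w, v) ∉ E)
    -- the underlying undirected graph is a tree (connected and acyclic):
    (htree : (SimpleGraph.fromRel (fun a b => (a, b) ∈ E)).IsTree)
    (lam : ℝ) (hlam : lam ∈ Set.Ioc (0:ℝ) 1)
    (Δ0 : V → Ωs → ℝ) (Om : V × V → Ωs → ℝ)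
    (hΔ0m : ∀ v, Measurable (Δ0 v)) (hOmm : ∀ e, Measurable (Om e))
    (hOm0 : ∀ e ω, 0 ≤ Om e ω) :
    ∀ n : ℕ,
      (∀ v : V,
        Measurable[sigmaOf Δ0 Om (Mminus (↑E : Set (V × V)) v ∪ {Sum.inl v})]
          (cascadeDelta lam E Δ0 Om n v))
      ∧ (∀ w v : V, (w, v) ∈ E →
        Measurable[sigmaOf Δ0 Om
            (Mminus (↑E : Set (V × V)) w ∪ MplusEx (↑E : Set (V × V)) w v
              ∪ {Sum.inl w} ∪ {Sum.inr (w, v)})]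
          (fun ω => Glam lam (Xexc E Om w v ω) (cascadeDelta lam E Δ0 Om n w ω)
            (Om (w, v) ω)))
      ∧ (∀ v : V,
        Measurable[sigmaOf Δ0 Om (Mminus (↑E : Set (V × V)) v)]
          (fun ω => ∑ w ∈ Finset.univ.filter (fun w => (w, v) ∈ E),
            Glam lam (Xexc E Om w v ω) (cascadeDelta lam E Δ0 Om n w ω) (Om (w, v) ω))) := by
  
  have hacyc : (SimpleGraph.fromRel (fun a b => (a, b) ∈ (↑E : Set (V × V)))).IsAcyclic :=
    htree.2
  have hloop' : ∀ v, (v, v) ∉ (↑E : Set (V × V)) := hloop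
  have hanti' : ∀ v w, (v, w) ∈ (↑E : Set (V × V)) → (w, v) ∉ (↑E : Set (V × V)) := hanti
  have key2 : ∀ (D : V → Ωs → ℝ),
      (∀ v, Measurable[sigmaOf Δ0 Om (Mminus (↑E : Set (V × V)) v ∪ {Sum.inl v})] (D v)) →
      ∀ w v : V, (w, v) ∈ E →
        Measurable[sigmaOf Δ0 Om
            (Mminus (↑E : Set (V × V)) w ∪ MplusEx (↑E : Set (V × V)) w v
              ∪ {Sum.inl w} ∪ {Sum.inr (w, v)})]
          (fun ω => Glam lam (Xexc E Om w v ω) (D w ω) (Om (w, v) ω)) := by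
    intro D hD w v hwv
    have hX : Measurable[sigmaOf Δ0 Om
        (Mminus (↑E : Set (V × V)) w ∪ MplusEx (↑E : Set (V × V)) w v
          ∪ {Sum.inl w} ∪ {Sum.inr (w, v)})] (fun ω => Xexc E Om w v ω) := by
      unfold Xexc
      apply Finset.measurable_sum
      intro u hu
      rw [Finset.mem_filter] at hu
      apply measurable_Om_of_mem
      have hmem : Sum.inr (w, u) ∈ MplusEx (↑E : Set (V × V)) w v :=
        Set.mem_biUnion (show u ∈ {u | (w, u) ∈ (↑E : Set (V × V)) ∧ u ≠ v} from
          ⟨hu.2.1, hu.2.2⟩) (Set.mem_insert _ _)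
      exact Or.inl (Or.inl (Or.inr hmem))
    have hDw : Measurable[sigmaOf Δ0 Om
        (Mminus (↑E : Set (V × V)) w ∪ MplusEx (↑E : Set (V × V)) w v
          ∪ {Sum.inl w} ∪ {Sum.inr (w, v)})] (D w) := by
      refine (hD w).mono (sigmaOf_mono _ _ ?_) le_rfl
      rintro z (hz | hz)
      · exact Or.inl (Or.inl (Or.inl hz))
      · exact Or.inl (Or.inr hz)
    have hOmwv : Measurable[sigmaOf Δ0 Om
        (Mminus (↑E : Set (V × V)) w ∪ MplusEx (↑E : Set (V × V)) w v
          ∪ {Sum.inl w} ∪ {Sum.inr (w, v)})] (Om (w, v)) :=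
      measurable_Om_of_mem _ _ (Or.inr rfl)
    exact measurable_Glam hX hDw hOmwv
  have key3 : ∀ (D : V → Ωs → ℝ),
      (∀ v, Measurable[sigmaOf Δ0 Om (Mminus (↑E : Set (V × V)) v ∪ {Sum.inl v})] (D v)) →
      ∀ v : V, Measurable[sigmaOf Δ0 Om (Mminus (↑E : Set (V × V)) v)]
        (fun ω => ∑ w ∈ Finset.univ.filter (fun w => (w, v) ∈ E),
          Glam lam (Xexc E Om w v ω) (D w ω) (Om (w, v) ω)) := by
    intro D hD v
    apply Finset.measurable_sum
    intro w hw
    rw [Finset.mem_filter] at hw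
    exact (key2 D hD w v hw.2).mono
      (sigmaOf_mono _ _ (subset_Mminus hloop' hanti' hacyc hw.2)) le_rfl
  intro n
  induction n with
  | zero =>
    have h1 : ∀ v, Measurable[sigmaOf Δ0 Om (Mminus (↑E : Set (V × V)) v ∪ {Sum.inl v})]
        (cascadeDelta lam E Δ0 Om 0 v) := fun v => measurable_Δ0_of_mem Δ0 Om (Or.inr rfl)
    exact ⟨h1, key2 _ h1, key3 _ h1⟩
  | succ n ih =>
    have h1 : ∀ v, Measurable[sigmaOf Δ0 Om (Mminus (↑E : Set (V × V)) v ∪ {Sum.inl v})]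
        (cascadeDelta lam E Δ0 Om (n + 1) v) := by
      intro v
      show Measurable[sigmaOf Δ0 Om (Mminus (↑E : Set (V × V)) v ∪ {Sum.inl v})] (fun ω => Δ0 v ω - ∑ w ∈ Finset.univ.filter (fun w => (w, v) ∈ E),
        Glam lam (Xexc E Om w v ω) (cascadeDelta lam E Δ0 Om n w ω) (Om (w, v) ω))
      exact (measurable_Δ0_of_mem Δ0 Om (Or.inr rfl)).sub
        ((key3 _ ih.1 v).mono (sigmaOf_mono _ _ Set.subset_union_left) le_rfl)
    exact ⟨h1, key2 _ h1, key3 _ h1⟩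
end
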